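/- arXiv:1505.06069 — 3 statements merged into one kernel-verified Lean document; each statement's English description precedes it below -/
import Mathlib

section
/- Let G = (V, E) be an N-edge-connected finite multigraph with |V| ≤ N^{2d}, and let ω₁ be an (ε/(4d))-percolation on G. For every fixed subset X ⊆ E, the probability that the number of connected components K(X ∪ ω₁) exceeds max(1, K(X)/√N) is at most √N · N^{2d√N} · (1 − ε/(4d))^N. -/
open MeasureTheory Real Set
open scoped ENNReal Classical

namespace Perco

/-- Reachability in a multigraph given by an endpoint map `ends`, using only edges in `X`. -/
def Reach {V E : Type*} (ends : E → V × V) (X : Set E) (a b : V) : Prop :=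
  Relation.ReflTransGen (fun u v => ∃ e ∈ X, ends e = (u, v) ∨ ends e = (v, u)) a b

/-- The graph `(V, X)` is connected. -/
def Connected {V E : Type*} (ends : E → V × V) (X : Set E) : Prop :=
  ∀ a b : V, Reach ends X a b

/-- `N`-edge-connectivity: connected, and removal of any set of at most `N` edges
keeps the graph connected. -/
def EdgeConnected {V E : Type*} (ends : E → V × V) (N : ℕ) : Prop :=
  Connected ends Set.univ ∧ ∀ F : Finset E, F.card ≤ N → Connected ends ((F : Set E)ᶜ)

/-- The edge boundary of a vertex set `S`: edges with exactly one endpoint in `S`. -/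
def cut {V E : Type*} (ends : E → V × V) (S : Set V) : Set E :=
  {e | ((ends e).1 ∈ S ∧ (ends e).2 ∉ S) ∨ ((ends e).1 ∉ S ∧ (ends e).2 ∈ S)}

/-- The number of connected components of the graph `(V, X)`. -/
noncomputable def K {V E : Type*} (ends : E → V × V) (X : Set E) : ℕ :=
  Set.ncard {C : Set V | ∃ v, C = {w | Reach ends X v w}}

/-- Product Bernoulli percolation with edge-dependent parameters `p e`. -/
def IsBernoulliFam {E : Type*} (p : E → ℝ≥0∞) (μ : Measure (E → Bool)) : Prop :=
  IsProbabilityMeasure μ ∧ ∀ (F : Finset E) (f : E → Bool),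
    μ {c | ∀ e ∈ F, c e = f e} = ∏ e ∈ F, (if f e then p e else 1 - p e)

/-- `ε`-Bernoulli percolation: each edge open independently with probability `ε`. -/
def IsBernoulli {E : Type*} (ε : ℝ≥0∞) (μ : Measure (E → Bool)) : Prop :=
  IsBernoulliFam (fun _ => ε) μ

/-- Set of open edges of a configuration. -/
def toSet {E : Type*} (c : E → Bool) : Set E := {e | c e = true}

/-- Increasing (upward closed) event. -/
def IncreasingEvent {E : Type*} (S : Set (E → Bool)) : Prop :=
  ∀ c c', c ∈ S → (∀ e, c e = true → c' e = true) → c' ∈ S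

/-- The event `S` depends only on the coordinates in `A`. -/
def DependsOn {E : Type*} (S : Set (E → Bool)) (A : Set E) : Prop :=
  ∀ c c', (∀ e ∈ A, c e = c' e) → (c ∈ S ↔ c' ∈ S)

/-- Vertices of `ℤ^d`. -/
abbrev Vtx (d : ℕ) := Fin d → ℤ

/-- Edges of `ℤ^d`: the pair `(x, i)` encodes the edge `{x, x + eᵢ}`. -/
abbrev EdgeZ (d : ℕ) := Vtx d × Fin d

/-- The `i`-th coordinate unit vector. -/
def unit (d : ℕ) (i : Fin d) : Vtx d := fun j => if j = i then 1 else 0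

/-- Endpoints of a lattice edge. -/
def ends' (d : ℕ) (e : EdgeZ d) : Vtx d × Vtx d := (e.1, e.1 + unit d e.2)

/-- `a` and `b` are `X`-connected inside the vertex set `S`. -/
def ConnIn (d : ℕ) (X : Set (EdgeZ d)) (S : Set (Vtx d)) (a b : Vtx d) : Prop :=
  a ∈ S ∧ b ∈ S ∧ Relation.ReflTransGen
    (fun u v => (∃ e ∈ X, ends' d e = (u, v) ∨ ends' d e = (v, u)) ∧ u ∈ S ∧ v ∈ S) a b

/-- The box `Λ_r = [-r, r]^d ∩ ℤ^d`. -/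
def box (d : ℕ) (r : ℝ) : Set (Vtx d) := {x | ∀ i, |(x i : ℝ)| ≤ r}

/-- `X` is everywhere percolating: every vertex lies in an infinite `X`-component. -/
def EverywherePerc (d : ℕ) (X : Set (EdgeZ d)) : Prop :=
  ∀ x : Vtx d, {y | ConnIn d X Set.univ x y}.Infinite

/-- Connected components of the graph induced by `X` on the box `Λ_R`. -/
def clusters (d : ℕ) (X : Set (EdgeZ d)) (R : ℝ) : Set (Set (Vtx d)) :=
  {C | ∃ x ∈ box d R, C = {y | ConnIn d X (box d R) x y}}

/-- `U_{0,b}(X)`: the number of components of `X` in `Λ_{8dn}` meeting `Λ_b`. -/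
noncomputable def U0 (d n : ℕ) (X : Set (EdgeZ d)) (b : ℝ) : ℕ :=
  Set.ncard {C | C ∈ clusters d X (8*d*n) ∧ (C ∩ box d b).Nonempty}

/-- `U_{a,b}(X)`: components of `X` in `Λ_{8dn}` avoiding `Λ_a` and meeting `Λ_b`. -/
noncomputable def Uab (d n : ℕ) (X : Set (EdgeZ d)) (a b : ℝ) : ℕ :=
  Set.ncard {C | C ∈ clusters d X (8*d*n) ∧ C ∩ box d a = ∅ ∧ (C ∩ box d b).Nonempty}

/-- The edge `e` has both endpoints in the vertex set `S`. -/
def edgeIn (d : ℕ) (S : Set (Vtx d)) (e : EdgeZ d) : Prop :=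
  e.1 ∈ S ∧ e.1 + unit d e.2 ∈ S

/-- The annulus `A_{r,R} = Λ_R \ Λ_r`. -/
def annulus (d : ℕ) (r R : ℝ) : Set (Vtx d) := box d R \ box d r

/-- `Y` percolates in `S`: the graph induced by `Y` on `S` has an infinite component. -/
def Percolates (d : ℕ) (Y : Set (EdgeZ d)) (S : Set (Vtx d)) : Prop :=
  ∃ x ∈ S, {y | ConnIn d Y S x y}.Infinite

/-- Endpoints of a lattice edge, as a set. -/
def endpoints (d : ℕ) (e : EdgeZ d) : Set (Vtx d) := {e.1, e.1 + unit d e.2}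

/-- Every edge of `A` is at `L^∞` distance at least 3 from every edge of `B`. -/
def FarApart (d : ℕ) (A B : Set (EdgeZ d)) : Prop :=
  ∀ e ∈ A, ∀ f ∈ B, ∀ p ∈ endpoints d e, ∀ q ∈ endpoints d f, ∃ i, 3 ≤ |p i - q i|

/-- The renormalized configuration `Y^{(n)}`: the edge `{x,y}` is open iff `2nx` is
`Y`-connected to `2ny` inside `n(x+y) + Λ_{2n}`. -/
noncomputable def renorm (d n : ℕ) (Y : Set (EdgeZ d)) : EdgeZ d → Bool := fun e =>
  if ConnIn d Y
      {z : Vtx d | ∀ i, |z i - (n : ℤ) * (e.1 i + (e.1 + unit d e.2) i)| ≤ 2 * (n : ℤ)}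
      ((2 * (n : ℤ)) • e.1) ((2 * (n : ℤ)) • (e.1 + unit d e.2))
  then true else false

/-- The critical parameter for Bernoulli bond percolation on `ℤ^d`. -/
noncomputable def pc (d : ℕ) : ℝ≥0∞ :=
  sSup {p : ℝ≥0∞ | p ≤ 1 ∧ ∀ μ : Measure (EdgeZ d → Bool), IsBernoulli p μ →
    μ {c | Percolates d (toSet c) Set.univ} = 0}


section Aux3

variable {V E : Type*}

lemma reach_mono (ends : E → V × V) {X Y : Set E} (hXY : X ⊆ Y) {a b : V}
    (h : Reach ends X a b) : Reach ends Y a b :=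
  Relation.ReflTransGen.mono (fun u v (huv : ∃ e ∈ X, ends e = (u, v) ∨ ends e = (v, u)) => by
    obtain ⟨e, he, hor⟩ := huv; exact ⟨e, hXY he, hor⟩) a b h

lemma reach_symm (ends : E → V × V) {X : Set E} {a b : V} (h : Reach ends X a b) :
    Reach ends X b a := by
  refine (@Relation.ReflTransGen.stdSymm _ _ ⟨?_⟩).symm _ _ h
  rintro u v ⟨e, he, hor⟩
  exact ⟨e, he, hor.symm⟩

lemma reach_class_eq (ends : E → V × V) {X : Set E} {a b : V} (h : Reach ends X a b) :
    {w | Reach ends X a w} = {w | Reach ends X b w} := by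
  ext w
  exact ⟨fun hw => Relation.ReflTransGen.trans (reach_symm ends h) hw,
    fun hw => Relation.ReflTransGen.trans h hw⟩

lemma K_eq_ncard_range (ends : E → V × V) (X : Set E) :
    K ends X = (Set.range fun v => {w | Reach ends X v w}).ncard := by
  unfold K
  congr 1
  ext C
  simp [Set.range, eq_comm]

lemma mem_of_reach_compl_cut (ends : E → V × V) {S : Set V} {a b : V}
    (h : Reach ends (cut ends S)ᶜ a b) (ha : a ∈ S) : b ∈ S := by
  induction h with
  | refl => exact ha
  | tail h₁ h₂ ih =>
    obtain ⟨e, he, hor⟩ := h₂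
    simp only [Set.mem_compl_iff, cut, Set.mem_setOf_eq] at he
    push_neg at he
    rcases hor with h' | h' <;> rw [h'] at he <;> simp at he <;> tauto

lemma exists_candidate {V E : Type*} [Fintype V] [Fintype E] (ends : E → V × V)
    {N : ℕ} (hN : 1 ≤ N) (hG : EdgeConnected ends N) (X : Set E) (c : E → Bool)
    (hc : max 1 ((K ends X : ℝ) / Real.sqrt N) < (K ends (X ∪ toSet c) : ℝ)) :
    ∃ T : Finset (Set V),
      (↑T : Set (Set V)) ⊆ Set.range (fun v => {w | Reach ends X v w}) ∧
      1 ≤ T.card ∧ (T.card : ℝ) < Real.sqrt N ∧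
      N ≤ (Set.toFinite (cut ends (⋃₀ (T : Set (Set V))))).toFinset.card ∧
      ∀ e ∈ cut ends (⋃₀ (T : Set (Set V))), c e = false := by
  classical
  set Y := X ∪ toSet c with hY
  set R1 : V → Set V := fun v => {w | Reach ends X v w} with hR1
  set R2 : V → Set V := fun v => {w | Reach ends Y v w} with hR2
  have hC1fin : (Set.range R1).Finite := Set.finite_range _
  have hC2fin : (Set.range R2).Finite := Set.finite_range _
  set C1 := hC1fin.toFinset with hC1
  set C2 := hC2fin.toFinset with hC2
  have hK1 : K ends X = C1.card := by
    rw [K_eq_ncard_range, Set.ncard_eq_toFinset_card _ hC1fin]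
  have hK2 : K ends Y = C2.card := by
    rw [K_eq_ncard_range, Set.ncard_eq_toFinset_card _ hC2fin]
  have hsqrtpos : (0 : ℝ) < Real.sqrt N := by
    apply Real.sqrt_pos.mpr
    exact_mod_cast hN
  have h1 : (1 : ℝ) < (K ends Y : ℝ) := lt_of_le_of_lt (le_max_left _ _) hc
  have h2 : (K ends X : ℝ) / Real.sqrt N < (K ends Y : ℝ) :=
    lt_of_le_of_lt (le_max_right _ _) hc
  have hK2two : 2 ≤ C2.card := by
    have h' : 1 < K ends Y := by exact_mod_cast h1
    rw [hK2] at h'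
    omega
  set φ : Set V → Set V := fun C => {w | ∃ u ∈ C, Reach ends Y u w} with hφ
  have hφR : ∀ v, φ (R1 v) = R2 v := by
    intro v
    ext w
    simp only [hφ, hR1, hR2, Set.mem_setOf_eq]
    constructor
    · rintro ⟨u, hu, huw⟩
      exact (reach_mono ends Set.subset_union_left hu).trans huw
    · intro h
      exact ⟨v, Relation.ReflTransGen.refl, h⟩
  have hmem1 : ∀ v : V, R1 v ∈ C1 := fun v => hC1fin.mem_toFinset.mpr ⟨v, rfl⟩
  have hmem2 : ∀ v : V, R2 v ∈ C2 := fun v => hC2fin.mem_toFinset.mpr ⟨v, rfl⟩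
  have hmap : ∀ C ∈ C1, φ C ∈ C2 := by
    intro C hC
    obtain ⟨v, hv⟩ := hC1fin.mem_toFinset.mp hC
    rw [← hv, hφR]
    exact hmem2 v
  have hsum : C1.card = ∑ D ∈ C2, (C1.filter (fun C => φ C = D)).card :=
    Finset.card_eq_sum_card_fiberwise hmap
  have hfib1 : ∀ D ∈ C2, 1 ≤ (C1.filter (fun C => φ C = D)).card := by
    intro D hD
    obtain ⟨v, hv⟩ := hC2fin.mem_toFinset.mp hD
    refine Finset.card_pos.mpr ⟨R1 v, Finset.mem_filter.mpr ⟨hmem1 v, ?_⟩⟩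
    rw [hφR]
    exact hv
  have hpig : ∃ D ∈ C2, ((C1.filter (fun C => φ C = D)).card : ℝ) < Real.sqrt N := by
    by_contra hcon
    push_neg at hcon
    have hge : (C2.card : ℕ) • Real.sqrt N
        ≤ ∑ D ∈ C2, ((C1.filter (fun C => φ C = D)).card : ℝ) :=
      Finset.card_nsmul_le_sum _ _ _ hcon
    have hsum' : ((C1.card : ℕ) : ℝ) = ∑ D ∈ C2, ((C1.filter (fun C => φ C = D)).card : ℝ) := by
      exact_mod_cast congrArg (Nat.cast : ℕ → ℝ) hsum
    rw [nsmul_eq_mul, ← hsum'] at hge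
    rw [div_lt_iff₀ hsqrtpos, hK1, hK2] at h2
    nlinarith [hge, h2]
  obtain ⟨D, hD, hDlt⟩ := hpig
  set T := C1.filter (fun C => φ C = D) with hT
  obtain ⟨v, hv⟩ := hC2fin.mem_toFinset.mp hD
  have hTunion : ⋃₀ (T : Set (Set V)) = D := by
    apply Set.Subset.antisymm
    · rintro w ⟨C, hCmem, hwC⟩
      have hC' := Finset.mem_filter.mp (Finset.mem_coe.mp hCmem)
      obtain ⟨u, hu⟩ := hC1fin.mem_toFinset.mp hC'.1
      rw [← hC'.2, ← hu, hφR]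
      rw [← hu] at hwC
      exact reach_mono ends Set.subset_union_left hwC
    · intro w hw
      have hvw : Reach ends Y v w := by rw [← hv] at hw; exact hw
      refine ⟨R1 w, ?_, Relation.ReflTransGen.refl⟩
      rw [Finset.mem_coe, hT, Finset.mem_filter]
      refine ⟨hmem1 w, ?_⟩
      rw [hφR, ← hv]
      exact (reach_class_eq ends hvw).symm
  have hclosed : ∀ e ∈ cut ends D, e ∉ Y := by
    intro e he hey
    rcases he with ⟨h1e, h2e⟩ | ⟨h1e, h2e⟩
    · apply h2e
      rw [← hv] at h1e ⊢
      exact Relation.ReflTransGen.tail h1e ⟨e, hey, Or.inl rfl⟩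
    · apply h1e
      rw [← hv] at h2e ⊢
      exact Relation.ReflTransGen.tail h2e ⟨e, hey, Or.inr rfl⟩
  have hDne : ∃ u, u ∉ D := by
    obtain ⟨D', hD', hne⟩ := Finset.exists_mem_ne (by omega : 1 < C2.card) D
    obtain ⟨u, hu⟩ := hC2fin.mem_toFinset.mp hD'
    refine ⟨u, fun huD => hne ?_⟩
    rw [← hu]
    rw [← hv] at huD ⊢
    exact (reach_class_eq ends huD).symm
  have hcutN : N ≤ (Set.toFinite (cut ends D)).toFinset.card := by
    by_contra hlt
    push_neg at hlt
    have hconn := hG.2 (Set.toFinite (cut ends D)).toFinset (le_of_lt hlt)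
    obtain ⟨u, hu⟩ := hDne
    have hreach := hconn v u
    rw [Set.Finite.coe_toFinset] at hreach
    have hvD : v ∈ D := by rw [← hv]; exact Relation.ReflTransGen.refl
    exact hu (mem_of_reach_compl_cut ends hreach hvD)
  refine ⟨T, ?_, hfib1 D hD, hDlt, ?_, ?_⟩
  · intro C hC
    have hC' := Finset.mem_filter.mp (Finset.mem_coe.mp hC)
    exact hC1fin.mem_toFinset.mp hC'.1
  · rw [hTunion]
    exact hcutN
  · intro e he
    rw [hTunion] at he
    have hnotY := hclosed e he
    rw [hY] at hnotY
    simp only [Set.mem_union, toSet, Set.mem_setOf_eq, not_or] at hnotY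
    exact Bool.not_eq_true _ ▸ (by simpa using hnotY.2)

end Aux3

/-- an `(ε/4d)`-percolation on an `N`-edge-connected multigraph with at most
`N^{2d}` vertices shrinks the number of components below `max(1, K(X)/√N)` except with
probability at most `√N · N^{2d√N} · (1 - ε/4d)^N`. -/
theorem stmt3 {V E : Type*} [Fintype V] [Fintype E] (ends : E → V × V)
    (N d : ℕ) (hN : 1 ≤ N) (hd : 1 ≤ d) (hG : EdgeConnected ends N)
    (hV : Fintype.card V ≤ N ^ (2 * d)) (ε : ℝ≥0∞) (hε0 : 0 < ε) (hε1 : ε < 1)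
    (μ : Measure (E → Bool)) (hμ : IsBernoulli (ε / (4 * d)) μ) (X : Set E) :
    μ {c | max 1 ((K ends X : ℝ) / Real.sqrt N) < (K ends (X ∪ toSet c) : ℝ)}
      ≤ ENNReal.ofReal (Real.sqrt N * (N : ℝ) ^ (2 * (d : ℝ) * Real.sqrt N))
          * (1 - ε / (4 * d)) ^ N := by
  classical
  obtain ⟨hprob, hber⟩ := hμ
  set p : ℝ≥0∞ := ε / (4 * d) with hp
  rcases isEmpty_or_nonempty V with hVe | hVne
  · -- no vertices: the event is empty
    have hev : {c : E → Bool |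
        max 1 ((K ends X : ℝ) / Real.sqrt N) < (K ends (X ∪ toSet c) : ℝ)} = ∅ := by
      ext c
      simp only [Set.mem_setOf_eq, Set.mem_empty_iff_false, iff_false, not_lt]
      have hz : K ends (X ∪ toSet c) = 0 := by
        have h0 : {C : Set V | ∃ v, C = {w | Reach ends (X ∪ toSet c) v w}} = ∅ := by
          haveI := hVe
          ext C
          simp
        rw [K, h0, Set.ncard_empty]
      rw [hz]
      exact le_trans (by norm_num) (le_max_left _ _)
    rw [hev]
    simp
  · -- main case
    obtain ⟨v0⟩ := hVne
    set R1 : V → Set V := fun v => {w | Reach ends X v w} with hR1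
    have hC1fin : (Set.range R1).Finite := Set.finite_range _
    set C1 := hC1fin.toFinset with hC1
    have hK1pos : 1 ≤ C1.card :=
      Finset.card_pos.mpr ⟨R1 v0, hC1fin.mem_toFinset.mpr ⟨v0, rfl⟩⟩
    set M := Nat.floor (Real.sqrt N) with hM
    have hsqrt1 : (1 : ℝ) ≤ Real.sqrt N := by
      have := Real.sqrt_le_sqrt (by exact_mod_cast hN : (1 : ℝ) ≤ (N : ℝ))
      rwa [Real.sqrt_one] at this
    have hMle : (M : ℝ) ≤ Real.sqrt N := Nat.floor_le (Real.sqrt_nonneg _)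
    set cutF : Finset (Set V) → Finset E :=
      fun T => (Set.toFinite (cut ends (⋃₀ (T : Set (Set V))))).toFinset with hcutF
    set I : Finset (Finset (Set V)) :=
      C1.powerset.filter (fun T => 1 ≤ T.card ∧ T.card ≤ M ∧ N ≤ (cutF T).card) with hI
    set Bad : Finset (Set V) → Set (E → Bool) :=
      fun T => {c | ∀ e ∈ cutF T, c e = false} with hBad
    -- inclusion in the union of bad events
    have hsub : {c : E → Bool |
        max 1 ((K ends X : ℝ) / Real.sqrt N) < (K ends (X ∪ toSet c) : ℝ)}
        ⊆ ⋃ T ∈ I, Bad T := by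
      intro c hc
      obtain ⟨T, hTsub, hT1, hTlt, hTcut, hTclosed⟩ :=
        exists_candidate ends hN hG X c hc
      have hTC1 : T ⊆ C1 := by
        intro C hC
        exact hC1fin.mem_toFinset.mpr (hTsub (Finset.mem_coe.mpr hC))
      have hTM : T.card ≤ M := Nat.le_floor (le_of_lt hTlt)
      have hTI : T ∈ I := by
        rw [hI, Finset.mem_filter, Finset.mem_powerset]
        exact ⟨hTC1, hT1, hTM, hTcut⟩
      refine Set.mem_biUnion hTI ?_
      intro e he
      rw [hcutF, Set.Finite.mem_toFinset] at he
      exact hTclosed e he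
    -- measure of one bad event
    have hBadle : ∀ T ∈ I, μ (Bad T) ≤ (1 - p) ^ N := by
      intro T hT
      have heq : μ (Bad T) = (1 - p) ^ (cutF T).card := by
        have hform := hber (cutF T) (fun _ => false)
        simp only [if_neg Bool.false_ne_true, Finset.prod_const] at hform
        exact hform
      rw [heq]
      have hNle : N ≤ (cutF T).card := by
        rw [hI, Finset.mem_filter] at hT
        exact hT.2.2.2
      exact pow_le_pow_of_le_one (by positivity) tsub_le_self hNle
    -- counting the index set
    have hKV : C1.card ≤ N ^ (2 * d) := by
      have h1 : (Set.range R1).ncard ≤ Fintype.card V := by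
        rw [← Set.image_univ]
        calc (R1 '' Set.univ).ncard ≤ (Set.univ : Set V).ncard :=
              Set.ncard_image_le Set.finite_univ
          _ = Fintype.card V := by rw [Set.ncard_univ, Nat.card_eq_fintype_card]
      have h2 : C1.card = (Set.range R1).ncard :=
        (Set.ncard_eq_toFinset_card _ hC1fin).symm
      omega
    have hIsub : I ⊆ (Finset.Icc 1 M).biUnion (fun m => C1.powersetCard m) := by
      intro T hT
      rw [hI, Finset.mem_filter, Finset.mem_powerset] at hT
      exact Finset.mem_biUnion.mpr ⟨T.card, Finset.mem_Icc.mpr ⟨hT.2.1, hT.2.2.1⟩,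
        Finset.mem_powersetCard.mpr ⟨hT.1, rfl⟩⟩
    have hInat : I.card ≤ M * C1.card ^ M := by
      calc I.card ≤ ((Finset.Icc 1 M).biUnion (fun m => C1.powersetCard m)).card :=
            Finset.card_le_card hIsub
        _ ≤ ∑ m ∈ Finset.Icc 1 M, (C1.powersetCard m).card := Finset.card_biUnion_le
        _ ≤ ∑ m ∈ Finset.Icc 1 M, C1.card ^ M := by
            refine Finset.sum_le_sum fun m hm => ?_
            rw [Finset.card_powersetCard]
            exact le_trans (Nat.choose_le_pow _ _)
              (Nat.pow_le_pow_right hK1pos (Finset.mem_Icc.mp hm).2)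
        _ = (Finset.Icc 1 M).card * C1.card ^ M := by rw [Finset.sum_const, smul_eq_mul]
        _ = M * C1.card ^ M := by rw [Nat.card_Icc, Nat.add_sub_cancel]
    have hreal : (I.card : ℝ) ≤ Real.sqrt N * (N : ℝ) ^ (2 * (d : ℝ) * Real.sqrt N) := by
      have hc1 : (I.card : ℝ) ≤ (M : ℝ) * ((C1.card : ℝ)) ^ M := by
        exact_mod_cast hInat
      have hc2 : ((C1.card : ℝ)) ^ M ≤ ((N : ℝ) ^ (2 * d)) ^ M := by
        apply pow_le_pow_left₀ (by positivity)
        exact_mod_cast le_trans hKV (le_refl _)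
      have hN1 : (1 : ℝ) ≤ (N : ℝ) := by exact_mod_cast hN
      have hc3 : ((N : ℝ) ^ (2 * d)) ^ M = (N : ℝ) ^ ((2 * d * M : ℕ) : ℝ) := by
        rw [← pow_mul, Real.rpow_natCast]
      have hc4 : (N : ℝ) ^ ((2 * d * M : ℕ) : ℝ)
          ≤ (N : ℝ) ^ (2 * (d : ℝ) * Real.sqrt N) := by
        apply Real.rpow_le_rpow_of_exponent_le hN1
        push_cast
        have hd0 : (0 : ℝ) ≤ 2 * (d : ℝ) := by positivity
        calc (2 : ℝ) * d * M ≤ 2 * d * Real.sqrt N :=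
              mul_le_mul_of_nonneg_left hMle hd0
          _ = 2 * (d : ℝ) * Real.sqrt N := by ring
      calc (I.card : ℝ) ≤ (M : ℝ) * ((C1.card : ℝ)) ^ M := hc1
        _ ≤ Real.sqrt N * ((N : ℝ) ^ (2 * d)) ^ M := by
            apply mul_le_mul hMle hc2 (by positivity) (Real.sqrt_nonneg _)
        _ = Real.sqrt N * (N : ℝ) ^ ((2 * d * M : ℕ) : ℝ) := by rw [hc3]
        _ ≤ Real.sqrt N * (N : ℝ) ^ (2 * (d : ℝ) * Real.sqrt N) :=
            mul_le_mul_of_nonneg_left hc4 (Real.sqrt_nonneg _)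
    have hcount : (I.card : ℝ≥0∞)
        ≤ ENNReal.ofReal (Real.sqrt N * (N : ℝ) ^ (2 * (d : ℝ) * Real.sqrt N)) := by
      rw [← ENNReal.ofReal_natCast]
      exact ENNReal.ofReal_le_ofReal hreal
    calc μ {c : E → Bool |
          max 1 ((K ends X : ℝ) / Real.sqrt N) < (K ends (X ∪ toSet c) : ℝ)}
        ≤ μ (⋃ T ∈ I, Bad T) := measure_mono hsub
      _ ≤ ∑ T ∈ I, μ (Bad T) := measure_biUnion_finset_le _ _
      _ ≤ ∑ T ∈ I, (1 - p) ^ N := Finset.sum_le_sum hBadle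
      _ = I.card * (1 - p) ^ N := by rw [Finset.sum_const, nsmul_eq_mul]
      _ ≤ ENNReal.ofReal (Real.sqrt N * (N : ℝ) ^ (2 * (d : ℝ) * Real.sqrt N))
            * (1 - p) ^ N := mul_le_mul_left hcount _

end Perco
end

section
/- There exist constants C₁, C₂ > 0 depending only on d and ε such that: for every integer N ≥ 1 and every N-edge-connected finite multigraph G = (V, E) with |V| ≤ N^{2d}, if ω ⊆ E is an ε-percolation on G, then the probability that the graph (V, ω) is connected is at least 1 − C₂ e^{−C₁ N}. -/
set_option linter.unusedSectionVars false
set_option linter.unusedVariables false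
set_option maxHeartbeats 1000000


open MeasureTheory Real Set
open scoped ENNReal Classical

namespace Perco

section Counting
variable {V E : Type*} [Fintype V] [Fintype E]

/-- finite cut -/
noncomputable def cutF (ends : E → V × V) (S : Set V) : Finset E :=
  Finset.univ.filter (fun e => e ∈ cut ends S)

/-- partition of V into blocks -/
def IsPartition (P : Finset (Set V)) : Prop :=
  (∀ B ∈ P, B.Nonempty) ∧ (∀ B ∈ P, ∀ B' ∈ P, B ≠ B' → Disjoint B B') ∧
    (∀ v : V, ∃ B ∈ P, v ∈ B)

/-- union of blocks -/
def Uob (P : Finset (Set V)) (S : Set V) : Prop := ∀ B ∈ P, B ⊆ S ∨ Disjoint B S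

/-- the counted family: proper nonempty unions of blocks with small cut -/
noncomputable def region (ends : E → V × V) (T : ℕ) (P : Finset (Set V)) :
    Finset (Set V) :=
  Finset.univ.filter (fun S => S.Nonempty ∧ S ≠ Set.univ ∧ Uob P S ∧ (cutF ends S).card ≤ T)

/-- crossing edges of a partition -/
noncomputable def crossF (ends : E → V × V) (P : Finset (Set V)) : Finset E :=
  Finset.univ.filter (fun e => ¬ ∃ B ∈ P, (ends e).1 ∈ B ∧ (ends e).2 ∈ B)

noncomputable def blockOf (P : Finset (Set V)) (v : V) : Set V :=
  if h : ∃ B ∈ P, v ∈ B then h.choose else ∅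

noncomputable def mergeP (P : Finset (Set V)) (B₁ B₂ : Set V) : Finset (Set V) :=
  insert (B₁ ∪ B₂) ((P.erase B₁).erase B₂)

lemma blockOf_mem {P : Finset (Set V)} (hP : IsPartition P) (v : V) :
    blockOf P v ∈ P ∧ v ∈ blockOf P v := by
  have h : ∃ B ∈ P, v ∈ B := hP.2.2 v
  rw [blockOf, dif_pos h]
  exact ⟨h.choose_spec.1, h.choose_spec.2⟩

lemma blockOf_eq {P : Finset (Set V)} (hP : IsPartition P) {v : V} {B : Set V}
    (hB : B ∈ P) (hv : v ∈ B) : B = blockOf P v := by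
  by_contra hne
  have := hP.2.1 B hB _ (blockOf_mem hP v).1 hne
  exact this.ne_of_mem hv (blockOf_mem hP v).2 rfl

lemma partition_merge {P : Finset (Set V)} (hP : IsPartition P) {B₁ B₂ : Set V}
    (h1 : B₁ ∈ P) (h2 : B₂ ∈ P) (hne : B₁ ≠ B₂) : IsPartition (mergeP P B₁ B₂) := by
  constructor
  · intro B hB
    rcases Finset.mem_insert.1 hB with h | h
    · subst h; exact (hP.1 B₁ h1).mono Set.subset_union_left
    · exact hP.1 B (Finset.mem_of_mem_erase (Finset.mem_of_mem_erase h))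
  constructor
  · intro B hB B' hB' hBB'
    rcases Finset.mem_insert.1 hB with h | h <;> rcases Finset.mem_insert.1 hB' with h' | h'
    · exact absurd (h.trans h'.symm) hBB'
    · subst h
      have hB'P := Finset.mem_of_mem_erase (Finset.mem_of_mem_erase h')
      have hne1 : B₁ ≠ B' := fun e => (Finset.ne_of_mem_erase (Finset.mem_of_mem_erase h')) e.symm
      have hne2 : B₂ ≠ B' := fun e => (Finset.ne_of_mem_erase h') e.symm
      exact Set.disjoint_union_left.2 ⟨hP.2.1 _ h1 _ hB'P hne1, hP.2.1 _ h2 _ hB'P hne2⟩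
    · subst h'
      have hBP := Finset.mem_of_mem_erase (Finset.mem_of_mem_erase h)
      have hne1 : B ≠ B₁ := Finset.ne_of_mem_erase (Finset.mem_of_mem_erase h)
      have hne2 : B ≠ B₂ := Finset.ne_of_mem_erase h
      exact Set.disjoint_union_right.2 ⟨hP.2.1 _ hBP _ h1 hne1, hP.2.1 _ hBP _ h2 hne2⟩
    · exact hP.2.1 _ (Finset.mem_of_mem_erase (Finset.mem_of_mem_erase h)) _
        (Finset.mem_of_mem_erase (Finset.mem_of_mem_erase h')) hBB'
  · intro v
    obtain ⟨B, hB, hv⟩ := hP.2.2 v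
    by_cases hB1 : B = B₁
    · exact ⟨B₁ ∪ B₂, Finset.mem_insert_self _ _, Or.inl (hB1 ▸ hv)⟩
    by_cases hB2 : B = B₂
    · exact ⟨B₁ ∪ B₂, Finset.mem_insert_self _ _, Or.inr (hB2 ▸ hv)⟩
    · exact ⟨B, Finset.mem_insert_of_mem (Finset.mem_erase.2 ⟨hB2, Finset.mem_erase.2 ⟨hB1, hB⟩⟩), hv⟩

lemma card_merge {P : Finset (Set V)} (hP : IsPartition P) {B₁ B₂ : Set V}
    (h1 : B₁ ∈ P) (h2 : B₂ ∈ P) (hne : B₁ ≠ B₂) :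
    (mergeP P B₁ B₂).card = P.card - 1 := by
  have hnot : B₁ ∪ B₂ ∉ (P.erase B₁).erase B₂ := by
    intro h
    have hBP := Finset.mem_of_mem_erase (Finset.mem_of_mem_erase h)
    have hne1 : B₁ ∪ B₂ ≠ B₁ := Finset.ne_of_mem_erase (Finset.mem_of_mem_erase h)
    have hdisj := hP.2.1 _ hBP _ h1 hne1
    have : Disjoint B₁ B₁ := (Set.disjoint_union_left.1 hdisj).1
    obtain ⟨x, hx⟩ := hP.1 B₁ h1
    exact this.ne_of_mem hx hx rfl
  have h2' : B₂ ∈ P.erase B₁ := Finset.mem_erase.2 ⟨fun e => hne e.symm, h2⟩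
  rw [mergeP, Finset.card_insert_of_notMem hnot, Finset.card_erase_of_mem h2',
    Finset.card_erase_of_mem h1]
  have : 2 ≤ P.card := Finset.one_lt_card.2 ⟨B₁, h1, B₂, h2, hne⟩
  omega


lemma uob_self {P : Finset (Set V)} (hP : IsPartition P) {B : Set V} (hB : B ∈ P) :
    Uob P B := by
  intro B' hB'
  by_cases h : B' = B
  · exact Or.inl (h ▸ subset_rfl)
  · exact Or.inr (hP.2.1 _ hB' _ hB h)

lemma cut_subset_cross {ends : E → V × V} {P : Finset (Set V)} {S : Set V}
    (hS : Uob P S) : cutF ends S ⊆ crossF ends P := by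
  intro e he
  rw [cutF, Finset.mem_filter] at he
  rw [crossF, Finset.mem_filter]
  refine ⟨Finset.mem_univ _, ?_⟩
  rintro ⟨B, hB, hu, hv⟩
  rcases hS B hB with h | h
  · rcases he.2 with ⟨_, h2⟩ | ⟨h1, _⟩
    · exact h2 (h hv)
    · exact h1 (h hu)
  · rcases he.2 with ⟨h1, _⟩ | ⟨_, h2⟩
    · exact h.ne_of_mem hu h1 rfl
    · exact h.ne_of_mem hv h2 rfl

lemma cross_ne {ends : E → V × V} {P : Finset (Set V)} (hP : IsPartition P) {e : E}
    (he : e ∈ crossF ends P) : blockOf P (ends e).1 ≠ blockOf P (ends e).2 := by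
  intro h
  rw [crossF, Finset.mem_filter] at he
  exact he.2 ⟨blockOf P (ends e).1, (blockOf_mem hP _).1,
    (blockOf_mem hP _).2, h ▸ (blockOf_mem hP (ends e).2).2⟩

/-- key bijection step: region of merged partition = region sets avoiding e -/
lemma region_merge {ends : E → V × V} {P : Finset (Set V)} (hP : IsPartition P)
    {e : E} (he : e ∈ crossF ends P) (T : ℕ) :
    region ends T (mergeP P (blockOf P (ends e).1) (blockOf P (ends e).2)) =
      (region ends T P).filter (fun S => e ∉ cutF ends S) := by
  set B₁ := blockOf P (ends e).1
  set B₂ := blockOf P (ends e).2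
  have hB₁ : B₁ ∈ P := (blockOf_mem hP (ends e).1).1
  have hB₂ : B₂ ∈ P := (blockOf_mem hP (ends e).2).1
  have hu : (ends e).1 ∈ B₁ := (blockOf_mem hP (ends e).1).2
  have hv : (ends e).2 ∈ B₂ := (blockOf_mem hP (ends e).2).2
  ext S
  simp only [region, Finset.mem_filter, Finset.mem_univ, true_and]
  constructor
  · rintro ⟨hne, hnu, huob, hcard⟩
    have huobP : Uob P S := by
      intro B hB
      by_cases h1 : B = B₁
      · rcases huob (B₁ ∪ B₂) (Finset.mem_insert_self _ _) with h | h
        · exact Or.inl (h1 ▸ (Set.subset_union_left.trans h))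
        · exact Or.inr (h1 ▸ (Set.disjoint_union_left.1 h).1)
      by_cases h2 : B = B₂
      · rcases huob (B₁ ∪ B₂) (Finset.mem_insert_self _ _) with h | h
        · exact Or.inl (h2 ▸ (Set.subset_union_right.trans h))
        · exact Or.inr (h2 ▸ (Set.disjoint_union_left.1 h).2)
      · exact huob B (Finset.mem_insert_of_mem (Finset.mem_erase.2 ⟨h2, Finset.mem_erase.2 ⟨h1, hB⟩⟩))
    refine ⟨⟨hne, hnu, huobP, hcard⟩, ?_⟩
    intro hecut
    rw [cutF, Finset.mem_filter] at hecut
    rcases huob (B₁ ∪ B₂) (Finset.mem_insert_self _ _) with h | h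
    · rcases hecut.2 with ⟨_, h2⟩ | ⟨h1, _⟩
      · exact h2 (h (Or.inr hv))
      · exact h1 (h (Or.inl hu))
    · rcases hecut.2 with ⟨h1, _⟩ | ⟨_, h2⟩
      · exact h.ne_of_mem (Or.inl hu) h1 rfl
      · exact h.ne_of_mem (Or.inr hv) h2 rfl
  · rintro ⟨⟨hne, hnu, huob, hcard⟩, hecut⟩
    refine ⟨hne, hnu, ?_, hcard⟩
    intro B hB
    rcases Finset.mem_insert.1 hB with h | h
    · subst h
      rw [cutF, Finset.mem_filter] at hecut
      push_neg at hecut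
      have hecut' := hecut (Finset.mem_univ e)
      rw [cut, Set.mem_setOf_eq] at hecut'
      push_neg at hecut'
      rcases huob B₁ hB₁ with h1 | h1
      · -- u ∈ S hence v ∈ S hence B₂ ⊆ S
        have hvS : (ends e).2 ∈ S := hecut'.1 (h1 hu)
        rcases huob B₂ hB₂ with h2 | h2
        · exact Or.inl (Set.union_subset h1 h2)
        · exact absurd rfl (h2.ne_of_mem hv hvS)
      · have huS : (ends e).1 ∉ S := fun hus => h1.ne_of_mem hu hus rfl
        have hvS : (ends e).2 ∉ S := hecut'.2 huS
        rcases huob B₂ hB₂ with h2 | h2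
        · exact absurd (h2 hv) hvS
        · exact Or.inr (Set.disjoint_union_left.2 ⟨h1, h2⟩)
    · exact huob B (Finset.mem_of_mem_erase (Finset.mem_of_mem_erase h))


lemma filter_cut_card {ends : E → V × V} {P : Finset (Set V)} {S : Set V}
    (hS : Uob P S) :
    ((crossF ends P).filter (fun e => e ∈ cutF ends S)).card = (cutF ends S).card := by
  congr 1
  ext e
  simp only [Finset.mem_filter]
  exact ⟨fun h => h.2, fun h => ⟨cut_subset_cross hS h, h⟩⟩

lemma sum_cut_blocks {ends : E → V × V} {P : Finset (Set V)} (hP : IsPartition P) :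
    ∑ B ∈ P, (cutF ends B).card ≤ 2 * (crossF ends P).card := by
  have h1 : ∀ B ∈ P, (cutF ends B).card
      = ((crossF ends P).filter (fun e => e ∈ cutF ends B)).card := by
    intro B hB
    exact (filter_cut_card (uob_self hP hB)).symm
  rw [Finset.sum_congr rfl h1]
  have h2 : ∀ B ∈ P, ((crossF ends P).filter (fun e => e ∈ cutF ends B)).card
      = ∑ e ∈ crossF ends P, if e ∈ cutF ends B then 1 else 0 := by
    intro B _; rw [Finset.card_filter]
  rw [Finset.sum_congr rfl h2, Finset.sum_comm]
  have h3 : ∀ e ∈ crossF ends P, (∑ B ∈ P, if e ∈ cutF ends B then 1 else 0) ≤ 2 := by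
    intro e he
    rw [← Finset.card_filter]
    have hsub : P.filter (fun B => e ∈ cutF ends B)
        ⊆ {blockOf P (ends e).1, blockOf P (ends e).2} := by
      intro B hB
      rw [Finset.mem_filter] at hB
      have hBc := hB.2
      rw [cutF, Finset.mem_filter] at hBc
      rcases hBc.2 with ⟨h1', _⟩ | ⟨_, h2'⟩
      · exact Finset.mem_insert.2 (Or.inl (blockOf_eq hP hB.1 h1'))
      · exact Finset.mem_insert.2 (Or.inr (Finset.mem_singleton.2 (blockOf_eq hP hB.1 h2')))
    calc (P.filter (fun B => e ∈ cutF ends B)).card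
        ≤ ({blockOf P (ends e).1, blockOf P (ends e).2} : Finset (Set V)).card :=
          Finset.card_le_card hsub
      _ ≤ 2 := Finset.card_insert_le _ _ |>.trans (by simp)
  calc ∑ e ∈ crossF ends P, ∑ B ∈ P, (if e ∈ cutF ends B then 1 else 0)
      ≤ ∑ _e ∈ crossF ends P, 2 := Finset.sum_le_sum h3
    _ = 2 * (crossF ends P).card := by rw [Finset.sum_const, smul_eq_mul, mul_comm]

lemma blocks_lower {ends : E → V × V} {P : Finset (Set V)} (hP : IsPartition P)
    {lam : ℕ} (hmin : ∀ S : Set V, S.Nonempty → S ≠ Set.univ → lam ≤ (cutF ends S).card)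
    (hP2 : 2 ≤ P.card) : P.card * lam ≤ 2 * (crossF ends P).card := by
  refine le_trans ?_ (sum_cut_blocks hP)
  have : ∀ B ∈ P, lam ≤ (cutF ends B).card := by
    intro B hB
    obtain ⟨B', hB', hne⟩ := Finset.exists_mem_ne (show 1 < P.card by omega) B
    obtain ⟨x, hx⟩ := hP.1 B' hB'
    have hxB : x ∉ B := fun h => (hP.2.1 _ hB' _ hB hne).ne_of_mem hx h rfl
    exact hmin B (hP.1 B hB) (fun h => hxB (h ▸ Set.mem_univ x))
  calc P.card * lam = ∑ _B ∈ P, lam := by rw [Finset.sum_const, smul_eq_mul]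
    _ ≤ ∑ B ∈ P, (cutF ends B).card := Finset.sum_le_sum this

lemma region_card_le_two_pow {ends : E → V × V} {P : Finset (Set V)}
    (hP : IsPartition P) (T : ℕ) : (region ends T P).card ≤ 2 ^ P.card := by
  have hrec : ∀ S ∈ region ends T P, S = ⋃₀ ↑(P.filter (fun B => B ⊆ S)) := by
    intro S hS
    rw [region, Finset.mem_filter] at hS
    obtain ⟨_, _, _, huob, _⟩ := hS
    ext v
    constructor
    · intro hv
      obtain ⟨B, hB, hvB⟩ := hP.2.2 v
      rcases huob B hB with h | h
      · exact ⟨B, by simpa [Finset.mem_filter] using ⟨hB, h⟩, hvB⟩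
      · exact absurd rfl (h.ne_of_mem hvB hv)
    · rintro ⟨B, hB, hvB⟩
      simp only [Finset.coe_filter, Set.mem_setOf_eq] at hB
      exact hB.2 hvB
  have hinj : Set.InjOn (fun S => P.filter (fun B => B ⊆ S))
      ↑(region ends T P) := by
    intro S₁ h1 S₂ h2 heq
    rw [hrec S₁ h1, hrec S₂ h2]
    simp only at heq
    rw [heq]
  calc (region ends T P).card ≤ P.powerset.card := by
        apply Finset.card_le_card_of_injOn _ (fun S _ => Finset.mem_powerset.2
          (Finset.filter_subset _ _)) hinj
    _ = 2 ^ P.card := Finset.card_powerset P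

lemma karger_count (ends : E → V × V) {lam T b : ℕ} (hlam : 1 ≤ lam)
    (hT : 2 * T ≤ b * lam)
    (hmin : ∀ S : Set V, S.Nonempty → S ≠ Set.univ → lam ≤ (cutF ends S).card) :
    ∀ k, ∀ P : Finset (Set V), IsPartition P → P.card = k → b + 1 ≤ k →
      (region ends T P).card ≤ 2 ^ (b + 1) * Nat.choose k b := by
  intro k
  induction k using Nat.strong_induction_on with
  | _ k ih =>
  intro P hP hcard hk
  rcases eq_or_lt_of_le hk with heq | hlt
  · have h1 : (region ends T P).card ≤ 2 ^ (b + 1) := by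
      rw [← heq] at hcard
      calc (region ends T P).card ≤ 2 ^ P.card := region_card_le_two_pow hP T
        _ = 2 ^ (b + 1) := by rw [hcard]
    have h2 : 1 ≤ Nat.choose k b := Nat.choose_pos (by omega)
    calc (region ends T P).card ≤ 2 ^ (b + 1) * 1 := by simpa using h1
      _ ≤ 2 ^ (b + 1) * Nat.choose k b := Nat.mul_le_mul_left _ h2
  · -- step case : b + 2 ≤ k
    set X := (region ends T P).card with hX
    set m := (crossF ends P).card with hm
    set A := 2 ^ (b + 1) * Nat.choose (k - 1) b with hA
    have h2m : k * lam ≤ 2 * m := by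
      rw [← hcard]; exact blocks_lower hP hmin (by omega)
    have hbk : (b + 2) * lam ≤ k * lam := Nat.mul_le_mul_right _ (by omega)
    have hmT : T + 1 ≤ m := by
      have : (b + 2) * lam = b * lam + 2 * lam := by ring
      omega
    -- sum over crossing edges
    have hsum : X * (m - T) ≤ ∑ e ∈ crossF ends P,
        (region ends T (mergeP P (blockOf P (ends e).1) (blockOf P (ends e).2))).card := by
      have heq1 : ∀ e ∈ crossF ends P,
          (region ends T (mergeP P (blockOf P (ends e).1) (blockOf P (ends e).2))).card
          = ((region ends T P).filter (fun S => e ∉ cutF ends S)).card := by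
        intro e he; rw [region_merge hP he]
      rw [Finset.sum_congr rfl heq1]
      have heq2 : ∀ e ∈ crossF ends P,
          ((region ends T P).filter (fun S => e ∉ cutF ends S)).card
          = ∑ S ∈ region ends T P, if e ∉ cutF ends S then 1 else 0 := by
        intro e _; rw [Finset.card_filter]
      rw [Finset.sum_congr rfl heq2, Finset.sum_comm]
      have hinner : ∀ S ∈ region ends T P,
          (m - T) ≤ ∑ e ∈ crossF ends P, if e ∉ cutF ends S then 1 else 0 := by
        intro S hS
        rw [← Finset.card_filter]
        have hSmem := hS
        rw [region, Finset.mem_filter] at hSmem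
        obtain ⟨_, _, _, huob, hcardS⟩ := hSmem
        have : (crossF ends P).filter (fun e => e ∉ cutF ends S)
            = crossF ends P \ (crossF ends P).filter (fun e => e ∈ cutF ends S) := by
          rw [Finset.filter_not]
        rw [this, Finset.card_sdiff_of_subset (Finset.filter_subset _ _), filter_cut_card huob]
        omega
      calc X * (m - T) = ∑ _S ∈ region ends T P, (m - T) := by
            rw [Finset.sum_const, smul_eq_mul]
        _ ≤ _ := Finset.sum_le_sum hinner
    have happ : ∀ e ∈ crossF ends P,
        (region ends T (mergeP P (blockOf P (ends e).1) (blockOf P (ends e).2))).card ≤ A := by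
      intro e he
      have hne := cross_ne hP he
      have hB₁ := (blockOf_mem hP (ends e).1).1
      have hB₂ := (blockOf_mem hP (ends e).2).1
      have hPm := partition_merge hP hB₁ hB₂ hne
      have hcm : (mergeP P (blockOf P (ends e).1) (blockOf P (ends e).2)).card = k - 1 := by
        rw [card_merge hP hB₁ hB₂ hne, hcard]
      exact ih (k - 1) (by omega) _ hPm hcm (by omega)
    have hXA : X * (m - T) ≤ m * A := by
      calc X * (m - T) ≤ _ := hsum
        _ ≤ (crossF ends P).card • A := Finset.sum_le_card_nsmul _ _ _ happ
        _ = m * A := by rw [smul_eq_mul]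
    -- arithmetic conclusion
    have hkT : k * T ≤ m * b := by
      have c1 : k * (2 * T) ≤ k * (b * lam) := Nat.mul_le_mul_left _ hT
      have c2 : b * (k * lam) ≤ b * (2 * m) := Nat.mul_le_mul_left _ h2m
      nlinarith
    have h2' : m * (k - b) ≤ k * (m - T) := by
      zify [show b ≤ k by omega, show T ≤ m by omega]
      nlinarith
    have hid : A * k = 2 ^ (b + 1) * Nat.choose k b * (k - b) := by
      have h := Nat.choose_mul_succ_eq (k - 1) b
      rw [Nat.sub_add_cancel (show 1 ≤ k by omega)] at h
      rw [hA, mul_assoc, h]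
      ring
    refine Nat.le_of_mul_le_mul_right ?_ (show 0 < (m - T) * (k - b) by
      have : 0 < m - T := by omega
      have : 0 < k - b := by omega
      positivity)
    calc X * ((m - T) * (k - b)) = (X * (m - T)) * (k - b) := by ring
      _ ≤ (m * A) * (k - b) := Nat.mul_le_mul_right _ hXA
      _ = A * (m * (k - b)) := by ring
      _ ≤ A * (k * (m - T)) := Nat.mul_le_mul_left _ h2'
      _ = (A * k) * (m - T) := by ring
      _ = (2 ^ (b + 1) * Nat.choose k b * (k - b)) * (m - T) := by rw [hid]
      _ = 2 ^ (b + 1) * Nat.choose k b * ((m - T) * (k - b)) := by ring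


lemma count_cuts (ends : E → V × V) {lam T b : ℕ} (hlam : 1 ≤ lam)
    (hT : 2 * T ≤ b * lam)
    (hmin : ∀ S : Set V, S.Nonempty → S ≠ Set.univ → lam ≤ (cutF ends S).card) :
    (Finset.univ.filter fun S : Set V =>
        S.Nonempty ∧ S ≠ Set.univ ∧ (cutF ends S).card ≤ T).card
      ≤ 2 ^ (b + 1) * (Nat.choose (Fintype.card V) b + 1) := by
  set P₀ : Finset (Set V) := Finset.univ.image (fun v => ({v} : Set V)) with hP₀
  have hpart : IsPartition P₀ := by
    refine ⟨?_, ?_, ?_⟩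
    · intro B hB
      obtain ⟨v, _, rfl⟩ := Finset.mem_image.1 hB
      exact Set.singleton_nonempty v
    · intro B hB B' hB' hne
      obtain ⟨v, _, rfl⟩ := Finset.mem_image.1 hB
      obtain ⟨w, _, rfl⟩ := Finset.mem_image.1 hB'
      exact Set.disjoint_singleton.2 (fun h => hne (by rw [h]))
    · intro v
      exact ⟨{v}, Finset.mem_image.2 ⟨v, Finset.mem_univ v, rfl⟩, rfl⟩
  have hcardP : P₀.card = Fintype.card V := by
    rw [hP₀, Finset.card_image_of_injective _ (fun a b h => by
      simpa using Set.singleton_eq_singleton_iff.1 h)]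
    exact Finset.card_univ
  have hreg : (Finset.univ.filter fun S : Set V =>
      S.Nonempty ∧ S ≠ Set.univ ∧ (cutF ends S).card ≤ T) = region ends T P₀ := by
    ext S
    simp only [region, Finset.mem_filter, Finset.mem_univ, true_and]
    constructor
    · rintro ⟨h1, h2, h3⟩
      refine ⟨h1, h2, ?_, h3⟩
      intro B hB
      obtain ⟨v, _, rfl⟩ := Finset.mem_image.1 hB
      by_cases hv : v ∈ S
      · exact Or.inl (Set.singleton_subset_iff.2 hv)
      · exact Or.inr (Set.disjoint_singleton_left.2 hv)
    · rintro ⟨h1, h2, _, h3⟩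
      exact ⟨h1, h2, h3⟩
  rw [hreg]
  rcases le_or_gt (b + 1) (Fintype.card V) with h | h
  · calc (region ends T P₀).card ≤ 2 ^ (b + 1) * Nat.choose (Fintype.card V) b :=
        karger_count ends hlam hT hmin _ P₀ hpart hcardP h
      _ ≤ _ := Nat.mul_le_mul_left _ (by omega)
  · calc (region ends T P₀).card ≤ 2 ^ P₀.card := region_card_le_two_pow hpart T
      _ ≤ 2 ^ (b + 1) := Nat.pow_le_pow_right (by omega) (by omega)
      _ ≤ _ := by nlinarith [Nat.pos_of_ne_zero (show (2:ℕ)^(b+1) ≠ 0 by positivity)]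


open Real in
lemma graph_sum_bound {ends : E → V × V} {q L r : ℝ} (hq0 : 0 < q) (hq1 : q < 1)
    (hL : L = -Real.log q) (hr : r = Real.exp (-(L/2)))
    {lam : ℕ} (hlam : 1 ≤ lam)
    (hmin : ∀ S : Set V, S.Nonempty → S ≠ Set.univ → lam ≤ (cutF ends S).card)
    (hcond : 3 * Real.log (2 * (max (Fintype.card V) 1 : ℕ)) ≤ L / 2 * lam) :
    ∑ S ∈ Finset.univ.filter (fun S : Set V => S.Nonempty ∧ S ≠ Set.univ),
        q ^ (cutF ends S).card
      ≤ 4 / (1 - r) * r ^ lam := by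
  have hLpos : 0 < L := by
    rw [hL]; simpa using Real.log_neg hq0 hq1
  have hr0 : 0 < r := hr ▸ Real.exp_pos _
  have hr1 : r < 1 := by
    rw [hr, ← Real.exp_zero]
    exact Real.exp_lt_exp.2 (by linarith)
  set n := Fintype.card V with hn
  set mR : ℕ := max n 1 with hmR
  set M := Fintype.card E + 1 with hM
  set 𝒮 := Finset.univ.filter (fun S : Set V => S.Nonempty ∧ S ≠ Set.univ) with h𝒮
  have hmaps : ∀ S ∈ 𝒮, (cutF ends S).card ∈ Finset.range M := by
    intro S _
    rw [Finset.mem_range, hM]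
    have := Finset.card_le_card (Finset.filter_subset (fun e => e ∈ cut ends S)
      Finset.univ)
    simp only [Finset.card_univ] at this
    exact Nat.lt_succ_of_le this
  rw [← Finset.sum_fiberwise_of_maps_to hmaps (fun S => q ^ (cutF ends S).card)]
  have hterm : ∀ k ∈ Finset.range M,
      ∑ S ∈ 𝒮.filter (fun S => (cutF ends S).card = k), q ^ (cutF ends S).card
        ≤ if lam ≤ k then 4 * r ^ k else 0 := by
    intro k _
    have hfib : ∀ S ∈ 𝒮.filter (fun S => (cutF ends S).card = k),
        q ^ (cutF ends S).card = q ^ k := by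
      intro S hS
      rw [Finset.mem_filter] at hS
      rw [hS.2]
    rw [Finset.sum_congr rfl hfib, Finset.sum_const, nsmul_eq_mul]
    by_cases hk : lam ≤ k
    · rw [if_pos hk]
      set b := 2 * k / lam + 1 with hb
      have hble : 2 * k ≤ b * lam := by
        have h1 := Nat.div_add_mod (2 * k) lam
        have h2 := Nat.mod_lt (2 * k) (show 0 < lam by omega)
        rw [hb]; nlinarith [Nat.div_add_mod (2 * k) lam]
      have hcount : (𝒮.filter (fun S => (cutF ends S).card = k)).card
          ≤ 2 ^ (b + 1) * (Nat.choose n b + 1) := by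
        refine le_trans (Finset.card_le_card ?_) (count_cuts ends hlam hble hmin)
        intro S hS
        simp only [h𝒮, Finset.mem_filter, Finset.mem_univ, true_and] at hS ⊢
        exact ⟨hS.1.1, hS.1.2, le_of_eq hS.2⟩
      -- real estimates
      have hmR1 : (1 : ℝ) ≤ (mR : ℝ) := by
        rw [hmR]; exact_mod_cast Nat.le_max_right n 1
      have hcountR : ((𝒮.filter (fun S => (cutF ends S).card = k)).card : ℝ)
          ≤ 4 * (2 * mR) ^ b := by
        calc ((𝒮.filter (fun S => (cutF ends S).card = k)).card : ℝ)
            ≤ (2 ^ (b + 1) * (Nat.choose n b + 1) : ℕ) := by exact_mod_cast hcount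
          _ = 2 ^ (b + 1) * ((Nat.choose n b : ℝ) + 1) := by push_cast; ring
          _ ≤ 2 ^ (b + 1) * ((mR : ℝ) ^ b + 1) := by
              have h1 : (Nat.choose n b : ℝ) ≤ (mR : ℝ) ^ b := by
                calc (Nat.choose n b : ℝ) ≤ ((n ^ b : ℕ) : ℝ) := by
                      exact_mod_cast Nat.choose_le_pow n b
                  _ ≤ (mR : ℝ) ^ b := by
                      push_cast
                      exact pow_le_pow_left₀ (by positivity)
                        (by exact_mod_cast Nat.le_max_left n 1) b
              have h2 : (0:ℝ) < 2 ^ (b+1) := by positivity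
              nlinarith
          _ ≤ 2 ^ (b + 1) * (2 * (mR : ℝ) ^ b) := by
              have h3 : (1:ℝ) ≤ (mR : ℝ) ^ b := by
                calc (1:ℝ) = 1 ^ b := (one_pow b).symm
                  _ ≤ (mR : ℝ) ^ b := pow_le_pow_left₀ zero_le_one hmR1 b
              have h2 : (0:ℝ) < 2 ^ (b+1) := by positivity
              nlinarith
          _ = 4 * (2 * mR) ^ b := by
              rw [mul_pow]; ring
      have hexp : (4 : ℝ) * (2 * mR) ^ b * q ^ k ≤ 4 * r ^ k := by
        have hmR1 : (1 : ℝ) ≤ (mR : ℝ) := by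
          rw [hmR]; exact_mod_cast Nat.le_max_right n 1
        have hlamR : (0:ℝ) < (lam:ℝ) := by exact_mod_cast hlam
        have hkR : (lam:ℝ) ≤ (k:ℝ) := by exact_mod_cast hk
        have h2mR : (1:ℝ) < 2 * mR := by nlinarith
        have hlog0 : 0 ≤ Real.log (2 * mR) := Real.log_nonneg h2mR.le
        have hpow : Real.exp (b * Real.log (2 * mR)) = ((2 * mR : ℝ)) ^ b := by
          rw [Real.exp_nat_mul, Real.exp_log (by linarith)]
        have hbk : (b : ℝ) ≤ 3 * k / lam := by
          have h1 : ((2 * k / lam : ℕ) : ℝ) ≤ ((2 * k : ℕ) : ℝ) / (lam : ℝ) :=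
            Nat.cast_div_le
          have h1' : ((2 * k / lam : ℕ) : ℝ) ≤ 2 * (k:ℝ) / (lam : ℝ) := by
            push_cast at h1 ⊢; linarith
          have h2 : (b:ℝ) = ((2*k/lam : ℕ):ℝ) + 1 := by rw [hb]; push_cast; ring
          have h3 : 2 * (k:ℝ)/(lam:ℝ) + 1 ≤ 3*(k:ℝ)/(lam:ℝ) := by
            rw [le_div_iff₀ hlamR]
            have he : (2*(k:ℝ)/(lam:ℝ) + 1) * lam = 2*k + lam := by field_simp
            rw [he]; linarith
          rw [h2]; linarith
        have hmain : (b:ℝ) * Real.log (2*mR) ≤ L/2 * k := by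
          calc (b:ℝ) * Real.log (2*mR) ≤ (3*k/lam) * Real.log (2*mR) :=
              mul_le_mul_of_nonneg_right hbk hlog0
            _ = (k/lam) * (3 * Real.log (2*mR)) := by ring
            _ ≤ (k/lam) * (L/2*lam) := by
                apply mul_le_mul_of_nonneg_left hcond (by positivity)
            _ = L/2*k := by field_simp
        have hq : Real.exp (-(L*(k:ℝ))) = q ^ k := by
          rw [show -(L*(k:ℝ)) = (k:ℝ) * Real.log q by rw [hL]; ring,
            Real.exp_nat_mul, Real.exp_log hq0]
        have hrk : r ^ k = Real.exp ((k:ℝ) * (-(L/2))) := by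
          rw [Real.exp_nat_mul, hr]
        have hpow2 : ((2*mR:ℝ))^b ≤ Real.exp (L/2*k) := by
          rw [← hpow]; exact Real.exp_le_exp.2 hmain
        rw [← hq, hrk]
        calc 4*(2*(mR:ℝ))^b * Real.exp (-(L*k)) ≤ 4*Real.exp (L/2*k) * Real.exp (-(L*k)) := by
              have he := Real.exp_pos (-(L*(k:ℝ)))
              nlinarith [hpow2]
          _ = 4 * Real.exp ((k:ℝ) * (-(L/2))) := by
              rw [mul_assoc, ← Real.exp_add]; congr 2; ring
      calc ((𝒮.filter (fun S => (cutF ends S).card = k)).card : ℝ) * q ^ k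
          ≤ 4 * (2 * mR) ^ b * q ^ k := by
            apply mul_le_mul_of_nonneg_right hcountR (by positivity)
        _ ≤ 4 * r ^ k := hexp
    · rw [if_neg hk]
      have : 𝒮.filter (fun S => (cutF ends S).card = k) = ∅ := by
        rw [Finset.filter_eq_empty_iff]
        intro S hS
        simp only [h𝒮, Finset.mem_filter, Finset.mem_univ, true_and] at hS
        intro hcard
        exact hk (hcard ▸ hmin S hS.1 hS.2)
      rw [this]
      simp
  calc ∑ k ∈ Finset.range M, ∑ S ∈ 𝒮.filter (fun S => (cutF ends S).card = k),
        q ^ (cutF ends S).card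
      ≤ ∑ k ∈ Finset.range M, if lam ≤ k then 4 * r ^ k else 0 :=
        Finset.sum_le_sum hterm
    _ = ∑ k ∈ (Finset.range M).filter (fun k => lam ≤ k), 4 * r ^ k :=
        (Finset.sum_filter _ _).symm
    _ = ∑ k ∈ Finset.Ico lam M, 4 * r ^ k := by
        congr 1
        ext k
        simp only [Finset.mem_filter, Finset.mem_range, Finset.mem_Ico]
        omega
    _ = 4 * ∑ k ∈ Finset.Ico lam M, r ^ k := by rw [Finset.mul_sum]
    _ ≤ 4 * (r ^ lam * (1 - r)⁻¹) := by
        apply mul_le_mul_of_nonneg_left _ (by norm_num)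
        rw [Finset.sum_Ico_eq_sum_range]
        calc ∑ k ∈ Finset.range (M - lam), r ^ (lam + k)
            = r ^ lam * ∑ k ∈ Finset.range (M - lam), r ^ k := by
              rw [Finset.mul_sum]
              exact Finset.sum_congr rfl (fun k _ => by rw [pow_add])
          _ ≤ r ^ lam * (1 - r)⁻¹ := by
              apply mul_le_mul_of_nonneg_left _ (by positivity)
              calc ∑ k ∈ Finset.range (M - lam), r ^ k
                  ≤ ∑' k : ℕ, r ^ k := Summable.sum_le_tsum _ (fun k _ => by positivity)
                    (summable_geometric_of_lt_one hr0.le hr1)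
                _ = (1 - r)⁻¹ := tsum_geometric_of_lt_one hr0.le hr1
    _ = 4 / (1 - r) * r ^ lam := by
        field_simp






lemma mincut_of_edgeConnected {ends : E → V × V} {N : ℕ}
    (h : EdgeConnected ends N) :
    ∀ S : Set V, S.Nonempty → S ≠ Set.univ → N + 1 ≤ (cutF ends S).card := by
  intro S hne hnu
  by_contra hlt
  push_neg at hlt
  have hconn := h.2 (cutF ends S) (by omega)
  obtain ⟨a, ha⟩ := hne
  obtain ⟨b, hb⟩ : ∃ b, b ∉ S := by
    by_contra h'
    push_neg at h'
    exact hnu (Set.eq_univ_iff_forall.2 h')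
  have hkey : ∀ w, Reach ends ((↑(cutF ends S) : Set E)ᶜ) a w → w ∈ S := by
    intro w hw
    induction hw with
    | refl => exact ha
    | tail _ hstep ih =>
      obtain ⟨e, he, hor⟩ := hstep
      have hecut : e ∉ cut ends S := by
        intro hc
        exact he (Finset.mem_coe.2 (by simp [cutF, hc]))
      rcases hor with h1 | h1 <;>
      · simp only [cut, Set.mem_setOf_eq, h1] at hecut
        tauto
  exact hb (hkey b (hconn a b))

lemma disc_subset (ends : E → V × V) :
    {c : E → Bool | ¬ Connected ends (toSet c)} ⊆
      ⋃ S ∈ Finset.univ.filter (fun S : Set V => S.Nonempty ∧ S ≠ Set.univ),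
        {c : E → Bool | ∀ e ∈ cutF ends S, c e = false} := by
  intro c hc
  rw [Set.mem_setOf_eq, Connected] at hc
  push_neg at hc
  obtain ⟨a, b, hab⟩ := hc
  set S : Set V := {w | Reach ends (toSet c) a w} with hS
  have haS : a ∈ S := Relation.ReflTransGen.refl
  have hbS : b ∉ S := hab
  have hSmem : S ∈ Finset.univ.filter (fun S : Set V => S.Nonempty ∧ S ≠ Set.univ) := by
    rw [Finset.mem_filter]
    exact ⟨Finset.mem_univ _, ⟨a, haS⟩, fun h => hbS (h ▸ Set.mem_univ b)⟩
  refine Set.mem_biUnion hSmem ?_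
  intro e he
  by_contra hce
  have het : e ∈ toSet c := by
    rw [toSet, Set.mem_setOf_eq]
    cases hcc : c e with
    | false => exact absurd hcc hce
    | true => rfl
  rw [cutF, Finset.mem_filter] at he
  rcases he.2 with ⟨h1, h2⟩ | ⟨h1, h2⟩
  · exact h2 (Relation.ReflTransGen.tail h1 ⟨e, het, Or.inl (Prod.mk.eta).symm⟩)
  · exact h1 (Relation.ReflTransGen.tail h2 ⟨e, het, Or.inr (Prod.mk.eta).symm⟩)

end Counting

open Real in
lemma exists_N0 (L : ℝ) (hL : 0 < L) (d : ℕ) :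
    ∃ N₀ : ℕ, 1 ≤ N₀ ∧ ∀ N : ℕ, N₀ ≤ N →
      3 * Real.log (2 * (N:ℝ)^(2*d)) ≤ L/2 * N := by
  set c := 2*(3+12*(d:ℝ))/L with hc
  have hc0 : 0 < c := by positivity
  refine ⟨⌈c^2⌉₊ + 1, by omega, ?_⟩
  intro N hN
  have hN1 : 1 ≤ N := by omega
  have hNR : (1:ℝ) ≤ N := by exact_mod_cast hN1
  have hNR0 : (0:ℝ) < N := by linarith
  have hcN : c^2 ≤ (N:ℝ) := by
    refine le_trans (Nat.le_ceil _) ?_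
    exact_mod_cast le_trans (Nat.le_succ _) hN
  have hsq : Real.sqrt N * Real.sqrt N = N := Real.mul_self_sqrt (by positivity)
  have hs1 : 1 ≤ Real.sqrt N := by
    rw [show (1:ℝ) = Real.sqrt 1 by simp]
    exact Real.sqrt_le_sqrt hNR
  have hcs : c ≤ Real.sqrt N := by
    rw [← Real.sqrt_sq hc0.le]
    exact Real.sqrt_le_sqrt hcN
  have hlogN : Real.log N ≤ 2 * Real.sqrt N := by
    have h1 : Real.log N = 2 * Real.log (Real.sqrt N) := by
      conv_lhs => rw [← Real.sq_sqrt (show (0:ℝ) ≤ N by positivity)]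
      rw [Real.log_pow]
      push_cast
      ring
    have h2 : Real.log (Real.sqrt N) ≤ Real.sqrt N - 1 :=
      Real.log_le_sub_one_of_pos (by linarith)
    linarith
  have hlog2 : Real.log 2 ≤ 1 := by
    have := Real.log_le_sub_one_of_pos (show (0:ℝ) < 2 by norm_num)
    linarith
  have hsplit : Real.log (2 * (N:ℝ)^(2*d)) = Real.log 2 + (2*d) * Real.log N := by
    rw [Real.log_mul (by norm_num) (by positivity), Real.log_pow]
    push_cast
    ring
  have hlogN0 : 0 ≤ Real.log N := Real.log_nonneg hNR
  have hd0 : (0:ℝ) ≤ (d:ℝ) := by positivity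
  calc 3 * Real.log (2 * (N:ℝ)^(2*d)) = 3 * Real.log 2 + 6*(d:ℝ) * Real.log N := by
        rw [hsplit]; ring
    _ ≤ 3 + 12*(d:ℝ) * Real.sqrt N := by nlinarith
    _ ≤ (3 + 12*(d:ℝ)) * Real.sqrt N := by nlinarith
    _ = L/2 * (c * Real.sqrt N) := by
        rw [hc]; field_simp
    _ ≤ L/2 * (Real.sqrt N * Real.sqrt N) := by
        have : c * Real.sqrt N ≤ Real.sqrt N * Real.sqrt N :=
          mul_le_mul_of_nonneg_right hcs (by linarith)
        nlinarith
    _ = L/2 * N := by rw [hsq]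




/-- an `ε`-percolation on any `N`-edge-connected multigraph with at most
`N^{2d}` vertices is connected with probability at least `1 - C₂ e^{-C₁ N}`. -/
theorem stmt4 (d : ℕ) (hd : 1 ≤ d) (ε : ℝ≥0∞) (hε0 : 0 < ε) (hε1 : ε < 1) :
    ∃ C₁ C₂ : ℝ, 0 < C₁ ∧ 0 < C₂ ∧
      ∀ (N : ℕ), 1 ≤ N → ∀ (V E : Type) (_ : Fintype V) (_ : Fintype E)
        (ends : E → V × V), EdgeConnected ends N → Fintype.card V ≤ N ^ (2 * d) →
        ∀ μ : Measure (E → Bool), IsBernoulli ε μ →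
          1 - ENNReal.ofReal (C₂ * Real.exp (-C₁ * N))
            ≤ μ {c | Connected ends (toSet c)} := by
  -- basic constants
  have hone : (1 : ℝ≥0∞) ≠ ⊤ := ENNReal.one_ne_top
  have hsub_ne_top : (1 : ℝ≥0∞) - ε ≠ ⊤ := by
    exact ne_top_of_le_ne_top hone tsub_le_self
  set q : ℝ := (1 - ε).toReal with hqdef
  have hq0 : 0 < q := by
    apply ENNReal.toReal_pos _ hsub_ne_top
    rw [← pos_iff_ne_zero]
    exact tsub_pos_iff_lt.2 hε1
  have hq1 : q < 1 := by
    have hlt : (1 : ℝ≥0∞) - ε < 1 :=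
      ENNReal.sub_lt_self hone one_ne_zero (pos_iff_ne_zero.1 hε0)
    have := ENNReal.toReal_lt_toReal hsub_ne_top hone |>.2 hlt
    simpa using this
  set L : ℝ := -Real.log q with hLdef
  have hL : 0 < L := by
    rw [hLdef]; simpa using Real.log_neg hq0 hq1
  set r : ℝ := Real.exp (-(L/2)) with hrdef
  have hr0 : 0 < r := Real.exp_pos _
  have hr1 : r < 1 := by
    rw [hrdef, ← Real.exp_zero]
    exact Real.exp_lt_exp.2 (by linarith)
  obtain ⟨N₀, hN₀1, hN₀⟩ := exists_N0 L hL d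
  refine ⟨L/2, 4/(1-r) + Real.exp (L/2 * N₀), by linarith,
    add_pos (div_pos (by norm_num) (by linarith)) (Real.exp_pos _), ?_⟩
  intro N hN1 V E instV instE ends hEC hcard μ hμ
  -- main split
  by_cases hcase : N < N₀
  · -- trivial case: the bound is ≤ 0
    have h1 : (1:ℝ) ≤ (4/(1-r) + Real.exp (L/2 * N₀)) * Real.exp (-(L/2) * N) := by
      have h2 : Real.exp (L/2 * N₀) * Real.exp (-(L/2) * N) = Real.exp (L/2*N₀ - L/2*N) := by
        rw [← Real.exp_add]; ring_nf
      have h3 : (1:ℝ) ≤ Real.exp (L/2*N₀ - L/2*N) := by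
        rw [← Real.exp_zero]
        apply Real.exp_le_exp.2
        have : (N:ℝ) ≤ (N₀:ℝ) := by exact_mod_cast hcase.le
        nlinarith
      have h4 : 0 < Real.exp (-(L/2) * N) := Real.exp_pos _
      have h5 : 0 < 4/(1-r) := div_pos (by norm_num) (by linarith)
      nlinarith
    have : (1:ℝ≥0∞) ≤ ENNReal.ofReal ((4/(1-r) + Real.exp (L/2 * N₀)) * Real.exp (-(L/2) * N)) :=
      ENNReal.one_le_ofReal.2 h1
    rw [tsub_eq_zero_of_le this]
    exact zero_le
  · push_neg at hcase
    -- measure bound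
    set 𝒮 := Finset.univ.filter (fun S : Set V => S.Nonempty ∧ S ≠ Set.univ) with h𝒮
    have hmin := mincut_of_edgeConnected hEC
    -- union bound
    have hub : μ {c : E → Bool | Connected ends (toSet c)}ᶜ
        ≤ ∑ S ∈ 𝒮, μ {c : E → Bool | ∀ e ∈ cutF ends S, c e = false} := by
      refine le_trans (measure_mono ?_) (measure_biUnion_finset_le 𝒮 _)
      rw [Set.compl_setOf]
      exact disc_subset ends
    -- each cut event
    have hev : ∀ S ∈ 𝒮, μ {c : E → Bool | ∀ e ∈ cutF ends S, c e = false}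
        = ENNReal.ofReal (q ^ (cutF ends S).card) := by
      intro S _
      have := hμ.2 (cutF ends S) (fun _ => false)
      simp only [if_neg Bool.false_ne_true] at this
      rw [show {c : E → Bool | ∀ e ∈ cutF ends S, c e = false}
          = {c : E → Bool | ∀ e ∈ cutF ends S, c e = (fun _ => false) e} from rfl, this,
        Finset.prod_const]
      rw [← ENNReal.ofReal_toReal hsub_ne_top, ← ENNReal.ofReal_pow ENNReal.toReal_nonneg]
    -- numeric bound on the sum
    have hlam : 1 ≤ N + 1 := by omega
    have hcond : 3 * Real.log (2 * ((max (Fintype.card V) 1 : ℕ):ℝ)) ≤ L / 2 * (N+1 : ℕ) := by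
      have hmRle : ((max (Fintype.card V) 1 : ℕ):ℝ) ≤ (N:ℝ)^(2*d) := by
        have h1 : max (Fintype.card V) 1 ≤ N ^ (2*d) := by
          apply max_le hcard
          exact Nat.one_le_pow _ _ (by omega)
        exact_mod_cast h1
      have hmR0 : (0:ℝ) < ((max (Fintype.card V) 1 : ℕ):ℝ) := by
        have : (1:ℕ) ≤ max (Fintype.card V) 1 := Nat.le_max_right _ _
        exact_mod_cast Nat.lt_of_lt_of_le Nat.zero_lt_one this
      calc 3 * Real.log (2 * ((max (Fintype.card V) 1 : ℕ):ℝ))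
          ≤ 3 * Real.log (2 * (N:ℝ)^(2*d)) := by
            have h2 : Real.log (2 * ((max (Fintype.card V) 1 : ℕ):ℝ))
                ≤ Real.log (2 * (N:ℝ)^(2*d)) :=
              Real.log_le_log (by linarith) (by linarith)
            linarith
        _ ≤ L/2 * N := hN₀ N hcase
        _ ≤ L/2 * (N+1:ℕ) := by
            push_cast
            nlinarith
    have hsum := graph_sum_bound (ends := ends) hq0 hq1 hLdef hrdef hlam
      (fun S h1 h2 => hmin S h1 h2) hcond
    -- assemble
    have hchain : μ {c : E → Bool | Connected ends (toSet c)}ᶜ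
        ≤ ENNReal.ofReal ((4/(1-r) + Real.exp (L/2 * N₀)) * Real.exp (-(L/2) * N)) := by
      calc μ {c : E → Bool | Connected ends (toSet c)}ᶜ
          ≤ ∑ S ∈ 𝒮, μ {c : E → Bool | ∀ e ∈ cutF ends S, c e = false} := hub
        _ = ∑ S ∈ 𝒮, ENNReal.ofReal (q ^ (cutF ends S).card) := Finset.sum_congr rfl hev
        _ = ENNReal.ofReal (∑ S ∈ 𝒮, q ^ (cutF ends S).card) :=
            (ENNReal.ofReal_sum_of_nonneg (fun S _ => by positivity)).symm
        _ ≤ ENNReal.ofReal ((4/(1-r) + Real.exp (L/2 * N₀)) * Real.exp (-(L/2) * N)) := by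
            apply ENNReal.ofReal_le_ofReal
            refine le_trans hsum ?_
            have hrpow : r ^ (N+1) ≤ Real.exp (-(L/2) * N) := by
              have h1 : r ^ (N+1) ≤ r ^ N :=
                pow_le_pow_of_le_one hr0.le hr1.le (by omega)
              have h2 : r ^ N = Real.exp (-(L/2) * N) := by
                rw [hrdef, ← Real.exp_nat_mul]
                congr 1
                ring
              linarith [h1, le_of_eq h2]
            have h40 : 0 < 4/(1-r) := div_pos (by norm_num) (by linarith)
            have hE0 : 0 < Real.exp (-(L/2) * N) := Real.exp_pos _
            have hE1 : 0 < Real.exp (L/2 * N₀) := Real.exp_pos _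
            calc 4/(1-r) * r ^ (N+1) ≤ 4/(1-r) * Real.exp (-(L/2) * N) := by
                  exact mul_le_mul_of_nonneg_left hrpow h40.le
              _ ≤ (4/(1-r) + Real.exp (L/2 * N₀)) * Real.exp (-(L/2) * N) := by nlinarith
    -- from complement bound to the goal
    rw [tsub_le_iff_right]
    have huniv : μ (Set.univ : Set (E → Bool)) = 1 := by
      haveI := hμ.1
      exact measure_univ
    calc (1:ℝ≥0∞) = μ (Set.univ : Set (E → Bool)) := huniv.symm
      _ = μ ({c : E → Bool | Connected ends (toSet c)}
            ∪ {c : E → Bool | Connected ends (toSet c)}ᶜ) := by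
          rw [Set.union_compl_self]
      _ ≤ μ {c : E → Bool | Connected ends (toSet c)}
            + μ {c : E → Bool | Connected ends (toSet c)}ᶜ := measure_union_le _ _
      _ ≤ μ {c : E → Bool | Connected ends (toSet c)}
            + ENNReal.ofReal ((4/(1-r) + Real.exp (L/2 * N₀)) * Real.exp (-(L/2) * N)) := by
          exact add_le_add_right hchain _



end Perco
end

section
/- Let X be an everywhere percolating subgraph of Z^d and suppose the annulus A_{m, m+√n} = Λ_{m+√n} \ Λ_m contains no connected component of X restricted to Λ_{8dn} that avoids Λ_m, i.e., U_{m, m+√n}(X) = 0. Then any nonempty proper union S of the clusters (components of X in Λ_{8dn}) meeting Λ_{m+√n}, when restricted to Λ_{m+√n}, has edge boundary inside Λ_{m+√n} of size at least √n. -/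
open MeasureTheory Real Set
open scoped ENNReal Classical

namespace Perco

def nrm {d : ℕ} (x : Vtx d) : ℕ := Finset.univ.sup fun i => (x i).natAbs

lemma natAbs_le_nrm {d : ℕ} (x : Vtx d) (i : Fin d) : (x i).natAbs ≤ nrm x :=
  Finset.le_sup (f := fun i => (x i).natAbs) (Finset.mem_univ i)

lemma nrm_le {d : ℕ} {x : Vtx d} {k : ℕ} (h : ∀ i, (x i).natAbs ≤ k) : nrm x ≤ k :=
  Finset.sup_le fun i _ => h i

lemma exists_nrm {d : ℕ} (hd : 1 ≤ d) (x : Vtx d) : ∃ i, (x i).natAbs = nrm x := by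
  obtain ⟨i, _, h⟩ := Finset.exists_mem_eq_sup (Finset.univ : Finset (Fin d))
    ⟨⟨0, by omega⟩, Finset.mem_univ _⟩ (fun i => (x i).natAbs)
  exact ⟨i, h.symm⟩

lemma cast_natAbs_eq {x : ℤ} : ((x.natAbs : ℝ)) = |(x : ℝ)| := by
  rw [Nat.cast_natAbs]; push_cast; ring

lemma mem_box_iff {d : ℕ} (hd : 1 ≤ d) {x : Vtx d} {R : ℝ} :
    x ∈ box d R ↔ (nrm x : ℝ) ≤ R := by
  constructor
  · intro h
    obtain ⟨i, hi⟩ := exists_nrm hd x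
    rw [← hi, cast_natAbs_eq]; exact h i
  · intro h i
    rw [← cast_natAbs_eq]
    exact le_trans (by exact_mod_cast natAbs_le_nrm x i) h

lemma add_smul_unit_apply {d : ℕ} (x : Vtx d) (s : ℤ) (j i : Fin d) :
    (x + s • unit d j) i = if i = j then x i + s else x i := by
  simp only [Pi.add_apply, Pi.smul_apply, unit, smul_eq_mul]
  split <;> ring

lemma add_unit_apply {d : ℕ} (x : Vtx d) (j i : Fin d) :
    (x + unit d j) i = if i = j then x i + 1 else x i := by
  have := add_smul_unit_apply x 1 j i
  simpa using this

lemma nrm_add_unit_le {d : ℕ} (x : Vtx d) (j : Fin d) : nrm (x + unit d j) ≤ nrm x + 1 := by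
  refine nrm_le fun i => ?_
  rw [add_unit_apply]
  have := natAbs_le_nrm x i
  split <;> omega

lemma nrm_le_add_unit {d : ℕ} (x : Vtx d) (j : Fin d) : nrm x ≤ nrm (x + unit d j) + 1 := by
  refine nrm_le fun i => ?_
  have := natAbs_le_nrm (x + unit d j) i
  rw [add_unit_apply] at this
  split at this <;> omega

lemma box_finite {d : ℕ} (R : ℝ) : (box d R).Finite := by
  have : box d R ⊆ Set.pi Set.univ (fun _ : Fin d => Set.Icc (-⌈R⌉) ⌈R⌉) := by
    intro x hx i _
    have h := hx i
    have h1 : (x i : ℝ) ≤ ⌈R⌉ := le_trans (le_trans (le_abs_self _) h) (Int.le_ceil R)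
    have h2 : (-(⌈R⌉:ℝ)) ≤ x i := by
      have := neg_abs_le ((x i : ℝ)); have h3 : -R ≤ (x i:ℝ) := by linarith [abs_le.mp h]
      linarith [Int.le_ceil R]
    exact ⟨by exact_mod_cast h2, by exact_mod_cast h1⟩
  exact Set.Finite.subset (Set.Finite.pi fun _ => Set.finite_Icc _ _) this

section Conn
variable {d : ℕ} {X : Set (EdgeZ d)} {S : Set (Vtx d)} {a b c : Vtx d}

lemma connStep_symm :
    Symmetric (fun u v => (∃ e ∈ X, ends' d e = (u, v) ∨ ends' d e = (v, u)) ∧ u ∈ S ∧ v ∈ S) := by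
  rintro u v ⟨⟨e, he, h⟩, hu, hv⟩
  exact ⟨⟨e, he, h.symm⟩, hv, hu⟩

lemma connIn_refl (h : a ∈ S) : ConnIn d X S a a := ⟨h, h, .refl⟩

lemma connIn_symm (h : ConnIn d X S a b) : ConnIn d X S b a :=
  ⟨h.2.1, h.1, (@Relation.ReflTransGen.symmetric _ _ ⟨fun _ _ hh => connStep_symm hh⟩).symm _ _ h.2.2⟩

lemma connIn_trans (h : ConnIn d X S a b) (h' : ConnIn d X S b c) : ConnIn d X S a c :=
  ⟨h.1, h'.2.1, h.2.2.trans h'.2.2⟩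

lemma cluster_eq {R : ℝ} {C D : Set (Vtx d)} (hC : C ∈ clusters d X R)
    (hD : D ∈ clusters d X R) (h : (C ∩ D).Nonempty) : C = D := by
  obtain ⟨x, hx, rfl⟩ := hC
  obtain ⟨y, hy, rfl⟩ := hD
  obtain ⟨z, hz1, hz2⟩ := h
  ext w
  constructor
  · intro hw; exact connIn_trans (connIn_trans hz2 (connIn_symm hz1)) hw
  · intro hw; exact connIn_trans (connIn_trans hz1 (connIn_symm hz2)) hw

lemma cluster_closed {R : ℝ} {C : Set (Vtx d)} {z w : Vtx d} (hC : C ∈ clusters d X R)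
    (hz : z ∈ C) (h : ConnIn d X (box d R) z w) : w ∈ C := by
  obtain ⟨x, hx, rfl⟩ := hC
  exact connIn_trans hz h

lemma reach_level (hd : 1 ≤ d) (hX : EverywherePerc d X) (ρ : ℝ) {z : Vtx d} {r : ℕ}
    (hz : nrm z ≤ r) (hr : (r : ℝ) ≤ ρ) :
    ∃ w, nrm w = r ∧ ConnIn d X (box d ρ) z w := by
  -- find a far away point in the universal cluster of z
  have hinf := hX z
  have hfin : {y : Vtx d | nrm y ≤ r}.Finite := by
    refine (box_finite (d := d) r).subset fun y hy => ?_
    exact (mem_box_iff hd).mpr (by exact_mod_cast hy)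
  obtain ⟨y, hy1, hy2⟩ : ∃ y, ConnIn d X Set.univ z y ∧ ¬ nrm y ≤ r := by
    by_contra hcon
    push_neg at hcon
    exact hinf (hfin.subset fun y hy => hcon y hy)
  have hy3 : r ≤ nrm y := by omega
  obtain ⟨-, -, hpath⟩ := hy1
  clear hy2 hinf hfin
  revert hz
  induction hpath using Relation.ReflTransGen.head_induction_on with
  | refl => exact fun hz => ⟨y, le_antisymm hz hy3, connIn_refl ((mem_box_iff hd).mpr (by
      rw [le_antisymm hz hy3]; exact hr))⟩
  | head hstep htail ih =>
      rename_i u v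
      intro hu
      by_cases hcase : nrm u = r
      · exact ⟨u, hcase, connIn_refl ((mem_box_iff hd).mpr (by rw [hcase]; exact hr))⟩
      · have hv : nrm v ≤ r := by
          obtain ⟨⟨e, he, hor⟩, -, -⟩ := hstep
          rcases hor with h | h
          · simp only [ends', Prod.mk.injEq] at h
            have := nrm_add_unit_le e.1 e.2
            rw [h.2, h.1] at this; omega
          · simp only [ends', Prod.mk.injEq] at h
            have := nrm_le_add_unit e.1 e.2
            rw [h.2, h.1] at this; omega
        obtain ⟨w, hw, hconn⟩ := ih hv
        refine ⟨w, hw, ?_⟩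
        have hubox : u ∈ box d ρ := (mem_box_iff hd).mpr (le_trans (by exact_mod_cast hu) hr)
        have hvbox : v ∈ box d ρ := (mem_box_iff hd).mpr (le_trans (by exact_mod_cast hv) hr)
        exact ⟨hubox, hconn.2.1, .head ⟨hstep.1, hubox, hvbox⟩ hconn.2.2⟩
end Conn

section Sphere
variable {d : ℕ}

def LAdj (u v : Vtx d) : Prop := ∃ j, v = u + unit d j ∨ u = v + unit d j

def sStep (S : Set (Vtx d)) (u v : Vtx d) : Prop := LAdj u v ∧ u ∈ S ∧ v ∈ S

def Sph (d r : ℕ) : Set (Vtx d) := {x | nrm x = r}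

lemma sStep_symm {S : Set (Vtx d)} : Symmetric (sStep S) := by
  rintro u v ⟨⟨j, h⟩, hu, hv⟩
  exact ⟨⟨j, h.symm⟩, hv, hu⟩

lemma nrm_eq_of_anchor {x : Vtx d} {r : ℕ} (h1 : ∀ k, (x k).natAbs ≤ r) {i : Fin d}
    (h2 : (x i).natAbs = r) : nrm x = r :=
  le_antisymm (nrm_le h1) (h2 ▸ natAbs_le_nrm x i)

lemma raise (S : Set (Vtx d)) (x : Vtx d) (j : Fin d) (k : ℕ)
    (h : ∀ s : ℕ, s ≤ k → x + (s : ℤ) • unit d j ∈ S) :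
    Relation.ReflTransGen (sStep S) x (x + (k : ℤ) • unit d j) := by
  induction k with
  | zero => simpa using Relation.ReflTransGen.refl
  | succ k ih =>
      have heq : x + ((k+1 : ℕ) : ℤ) • unit d j = (x + (k : ℤ) • unit d j) + unit d j := by
        push_cast; rw [add_smul, one_smul, add_assoc]
      rw [heq]
      refine (ih fun s hs => h s (by omega)).tail ?_
      refine ⟨⟨j, Or.inl rfl⟩, h k (by omega), ?_⟩
      rw [← heq]; exact h (k+1) le_rfl

/-- Raise coordinate `j` of `x` to the value `t ≥ x j`, staying in `S`. -/
lemma raise_to (S : Set (Vtx d)) (x : Vtx d) (j : Fin d) (t : ℤ) (hxt : x j ≤ t)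
    (h : ∀ y : Vtx d, (∀ i, i ≠ j → y i = x i) → x j ≤ y j → y j ≤ t → y ∈ S) :
    ∃ y : Vtx d, (∀ i, i ≠ j → y i = x i) ∧ y j = t ∧
      Relation.ReflTransGen (sStep S) x y := by
  set k : ℕ := (t - x j).toNat with hk
  have hkk : (k : ℤ) = t - x j := Int.toNat_of_nonneg (by omega)
  refine ⟨x + (k : ℤ) • unit d j, ?_, ?_, ?_⟩
  · intro i hij; rw [add_smul_unit_apply]; simp [hij]
  · rw [add_smul_unit_apply]; simp; omega
  · refine raise S x j k fun s hs => ?_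
    refine h _ (fun i hij => by rw [add_smul_unit_apply]; simp [hij]) ?_ ?_ <;>
      rw [add_smul_unit_apply] <;> simp <;> omega

lemma corner_reach {r : ℕ} (hr : 1 ≤ r) :
    ∀ N (x : Vtx d), (Finset.univ.filter fun k => x k ≠ (r:ℤ)).card ≤ N →
      (∀ k, (x k).natAbs ≤ r) → (∃ j, x j = (r:ℤ)) →
      Relation.ReflTransGen (sStep (Sph d r)) x (fun _ => (r:ℤ)) := by
  intro N
  induction N with
  | zero =>
      intro x hcard hbound hj
      have : x = fun _ => (r:ℤ) := by
        funext k
        by_contra hk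
        have : k ∈ Finset.univ.filter fun k => x k ≠ (r:ℤ) := by simp [hk]
        have := Finset.card_pos.mpr ⟨k, this⟩
        omega
      rw [this]
  | succ N ih =>
      intro x hcard hbound hj
      by_cases hall : ∀ k, x k = (r:ℤ)
      · have : x = fun _ => (r:ℤ) := funext hall
        rw [this]
      · push_neg at hall
        obtain ⟨k, hk⟩ := hall
        obtain ⟨j, hjr⟩ := hj
        have hkj : k ≠ j := fun h => hk (h ▸ hjr)
        have hxk : x k ≤ (r:ℤ) := by have := hbound k; omega
        have hside : ∀ y : Vtx d, (∀ i, i ≠ k → y i = x i) → x k ≤ y k → y k ≤ r →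
            y ∈ Sph d r := by
          intro y hy1 hy2 hy3
          refine nrm_eq_of_anchor (i := j) ?_ ?_
          · intro i
            by_cases hik : i = k
            · subst hik; have := hbound i; omega
            · rw [hy1 i hik]; exact hbound i
          · rw [hy1 j (Ne.symm hkj), hjr]; simp
        obtain ⟨y, hy1, hy2, hy3⟩ := raise_to (Sph d r) x k r hxk hside
        refine hy3.trans (ih y ?_ ?_ ⟨j, by rw [hy1 j (Ne.symm hkj)]; exact hjr⟩)
        · have hsub : (Finset.univ.filter fun i => y i ≠ (r:ℤ)) ⊆
              (Finset.univ.filter fun i => x i ≠ (r:ℤ)).erase k := by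
            intro i hi
            simp only [Finset.mem_filter, Finset.mem_univ, true_and] at hi
            rw [Finset.mem_erase]
            have hik : i ≠ k := fun h => hi (h ▸ hy2)
            refine ⟨hik, by simp [← hy1 i hik, hi]⟩
          have h1 := Finset.card_le_card hsub
          have h2 : k ∈ Finset.univ.filter fun i => x i ≠ (r:ℤ) := by simp [hk]
          have h3 := Finset.card_erase_of_mem h2
          omega
        · intro i
          by_cases hik : i = k
          · rw [hik, hy2]; simp
          · rw [hy1 i hik]; exact hbound i

lemma sphere_conn (hd : 2 ≤ d) {r : ℕ} (hr : 1 ≤ r) {a b : Vtx d} (ha : nrm a = r)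
    (hb : nrm b = r) : Relation.ReflTransGen (sStep (Sph d r)) a b := by
  have key : ∀ c : Vtx d, nrm c = r →
      Relation.ReflTransGen (sStep (Sph d r)) c (fun _ => (r:ℤ)) := by
    intro c hc
    obtain ⟨i, hi⟩ := exists_nrm (by omega) c
    rw [hc] at hi
    obtain ⟨j, hij⟩ : ∃ j : Fin d, j ≠ i := by
      rcases Fintype.exists_ne_of_one_lt_card (by simp; omega) i with ⟨j, hj⟩
      exact ⟨j, hj⟩
    have hbound : ∀ k, (c k).natAbs ≤ r := fun k => hc ▸ natAbs_le_nrm c k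
    have hcj : c j ≤ (r:ℤ) := by have := hbound j; omega
    have hside : ∀ y : Vtx d, (∀ k, k ≠ j → y k = c k) → c j ≤ y j → y j ≤ r →
        y ∈ Sph d r := by
      intro y h1 h2 h3
      refine nrm_eq_of_anchor (i := i) ?_ ?_
      · intro k
        by_cases hkj : k = j
        · subst hkj; have := hbound k; omega
        · rw [h1 k hkj]; exact hbound k
      · rw [h1 i (Ne.symm hij)]; exact hi
    obtain ⟨y, hy1, hy2, hy3⟩ := raise_to (Sph d r) c j r hcj hside
    refine hy3.trans (corner_reach hr _ y le_rfl ?_ ⟨j, hy2⟩)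
    intro k
    by_cases hkj : k = j
    · rw [hkj, hy2]; simp
    · rw [hy1 k hkj]; exact hbound k
  exact (key a ha).trans ((@Relation.ReflTransGen.symmetric _ _ ⟨fun _ _ hh => sStep_symm hh⟩).symm _ _ (key b hb))

lemma find_cut {S T : Set (Vtx d)} :
    ∀ {a b : Vtx d}, Relation.ReflTransGen (sStep S) a b → a ∈ T → b ∉ T →
      ∃ u v, sStep S u v ∧ u ∈ T ∧ v ∉ T := by
  intro a b h
  induction h using Relation.ReflTransGen.head_induction_on with
  | refl => intro h1 h2; exact absurd h1 h2
  | head hstep htail ih =>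
      rename_i u v
      intro hu hb
      by_cases hv : v ∈ T
      · exact ih hv hb
      · exact ⟨u, v, hstep, hu, hv⟩
end Sphere

/-- if `U_{m,m+√n}(X) = 0`, any nonempty proper union of the clusters meeting
`Λ_{m+√n}` has edge boundary inside `Λ_{m+√n}` of size at least `√n`. -/
theorem stmt9 (d n : ℕ) (hd : 2 ≤ d) (hn : 1 ≤ n) (m : ℝ) (hm : (n : ℝ) ≤ m)
    (hbox : m + Real.sqrt n ≤ 8 * d * n)
    (X : Set (EdgeZ d)) (hX : EverywherePerc d X)
    (hU : ∀ C ∈ clusters d X (8 * d * n),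
      (C ∩ box d (m + Real.sqrt n)).Nonempty → (C ∩ box d m).Nonempty)
    (𝒞 : Set (Set (Vtx d)))
    (h𝒞 : 𝒞 ⊆ {C | C ∈ clusters d X (8 * d * n) ∧ (C ∩ box d (m + Real.sqrt n)).Nonempty})
    (hne : 𝒞.Nonempty)
    (hproper : ∃ C ∈ clusters d X (8 * d * n),
      (C ∩ box d (m + Real.sqrt n)).Nonempty ∧ C ∉ 𝒞) :
    Real.sqrt n ≤
      ({e : EdgeZ d | edgeIn d (box d (m + Real.sqrt n)) e ∧
        ((e.1 ∈ ⋃₀ 𝒞 ∧ e.1 + unit d e.2 ∉ ⋃₀ 𝒞) ∨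
         (e.1 ∉ ⋃₀ 𝒞 ∧ e.1 + unit d e.2 ∈ ⋃₀ 𝒞))}).ncard := by
  classical
  set T := ⋃₀ 𝒞 with hT
  set Cut := {e : EdgeZ d | edgeIn d (box d (m + Real.sqrt n)) e ∧
        ((e.1 ∈ T ∧ e.1 + unit d e.2 ∉ T) ∨
         (e.1 ∉ T ∧ e.1 + unit d e.2 ∈ T))} with hCutdef
  have hd1 : 1 ≤ d := by omega
  have hm0 : (0:ℝ) < m := by
    have h1 : (1:ℝ) ≤ (n:ℝ) := by exact_mod_cast hn
    linarith
  set M := Nat.floor m with hM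
  set L := Nat.floor (Real.sqrt n) with hL
  have hnM : n ≤ M := Nat.le_floor hm
  have hM1 : 1 ≤ M := le_trans hn hnM
  have hMle : (M:ℝ) ≤ m := Nat.floor_le hm0.le
  have hLle : (L:ℝ) ≤ Real.sqrt n := Nat.floor_le (Real.sqrt_nonneg _)
  obtain ⟨C, hC𝒞⟩ := hne
  obtain ⟨hCcl, hCmeet⟩ := h𝒞 hC𝒞
  obtain ⟨z, hzC, hzbox⟩ := hU C hCcl hCmeet
  obtain ⟨C', hC'cl, hC'meet, hC'notin⟩ := hproper
  obtain ⟨z', hz'C', hz'box⟩ := hU C' hC'cl hC'meet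
  have hznrm : nrm z ≤ M := Nat.le_floor ((mem_box_iff hd1).mp hzbox)
  have hz'nrm : nrm z' ≤ M := Nat.le_floor ((mem_box_iff hd1).mp hz'box)
  have key : ∀ t : Fin (L+1), ∃ e, e ∈ Cut ∧ nrm e.1 = M + t.val := by
    intro t
    set r := M + t.val with hr
    have hr1 : 1 ≤ r := le_trans hM1 (Nat.le_add_right _ _)
    have hrle : (r:ℝ) ≤ m + Real.sqrt n := by
      have ht : (t.val:ℝ) ≤ (L:ℝ) := by exact_mod_cast Nat.lt_succ_iff.mp t.isLt
      push_cast [hr]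
      linarith
    have hrρ : (r:ℝ) ≤ 8 * d * n := le_trans hrle hbox
    obtain ⟨w, hwnrm, hwconn⟩ :=
      reach_level hd1 hX (8 * d * n : ℝ) (le_trans hznrm (Nat.le_add_right _ _)) hrρ
    obtain ⟨w', hw'nrm, hw'conn⟩ :=
      reach_level hd1 hX (8 * d * n : ℝ) (le_trans hz'nrm (Nat.le_add_right _ _)) hrρ
    have hwC : w ∈ C := cluster_closed hCcl hzC hwconn
    have hw'C' : w' ∈ C' := cluster_closed hC'cl hz'C' hw'conn
    have hwT : w ∈ T := ⟨C, hC𝒞, hwC⟩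
    have hw'T : w' ∉ T := by
      rintro ⟨D, hD𝒞, hw'D⟩
      have hD := (h𝒞 hD𝒞).1
      have heq : C' = D := cluster_eq hC'cl hD ⟨w', hw'C', hw'D⟩
      exact hC'notin (heq ▸ hD𝒞)
    have hpath := sphere_conn hd hr1 hwnrm hw'nrm
    obtain ⟨u, v, ⟨⟨j, hj⟩, huS, hvS⟩, huT, hvT⟩ := find_cut hpath hwT hw'T
    have hunrm : nrm u = r := huS
    have hvnrm : nrm v = r := hvS
    have hub : u ∈ box d (m + Real.sqrt n) := (mem_box_iff hd1).mpr (by rw [hunrm]; exact hrle)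
    have hvb : v ∈ box d (m + Real.sqrt n) := (mem_box_iff hd1).mpr (by rw [hvnrm]; exact hrle)
    rcases hj with hj | hj
    · refine ⟨(u, j), ⟨⟨hub, by rw [← hj]; exact hvb⟩,
        Or.inl ⟨huT, by rw [← hj]; exact hvT⟩⟩, hunrm⟩
    · refine ⟨(v, j), ⟨⟨hvb, by rw [← hj]; exact hub⟩,
        Or.inr ⟨hvT, by rw [← hj]; exact huT⟩⟩, hvnrm⟩
  choose f hf using key
  have hCutfin : Cut.Finite := by
    refine ((box_finite (d := d) (m + Real.sqrt n)).prod
      (Set.finite_univ (α := Fin d))).subset ?_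
    rintro e ⟨⟨h1, h2⟩, -⟩
    exact ⟨h1, Set.mem_univ _⟩
  have hinj : Function.Injective f := by
    intro s t hst
    have h1 := (hf s).2
    have h2 := (hf t).2
    rw [hst] at h1
    exact Fin.ext (by omega)
  have hcard : L + 1 ≤ Cut.ncard := by
    have hmem : ∀ t, f t ∈ hCutfin.toFinset := fun t => hCutfin.mem_toFinset.mpr (hf t).1
    have hle : Fintype.card (Fin (L+1)) ≤ Fintype.card hCutfin.toFinset :=
      Fintype.card_le_of_injective (fun t => ⟨f t, hmem t⟩)
        (fun a b h => hinj (congrArg Subtype.val h))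
    rw [Fintype.card_coe, Fintype.card_fin] at hle
    rwa [Set.ncard_eq_toFinset_card Cut hCutfin]
  have hlt : Real.sqrt n < (L:ℝ) + 1 := Nat.lt_floor_add_one _
  have hle : ((L:ℝ) + 1) ≤ (Cut.ncard : ℝ) := by exact_mod_cast hcard
  linarith


end Perco
end
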